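/- For POVMs A and B on a Hilbert space H, if A ⪯_w B (A is weakly fuzzier than B, i.e. A(E) = ∫ κ(E|y) dB(y) for some B-weak Markov kernel κ), then for any f-divergence D_f and any states ρ, σ: D_f(P^A_ρ, P^A_σ) ≤ D_f(P^B_ρ, P^B_σ). Consequently, if A ≃_w B then D_f(P^A_ρ, P^A_σ) = D_f(P^B_ρ, P^B_σ) for all states ρ, σ. -/

import Mathlib

open MeasureTheory
open scoped InnerProductSpace ENNReal

/-- A positive-operator valued measure on outcome space `Ω` over the Hilbert space `H`.
σ-additivity in the weak operator topology is encoded by the family of scalar measures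
`E ↦ ⟪x, A(E) x⟫` attached to each vector `x`. -/
structure POVM (Ω : Type*) [MeasurableSpace Ω] (H : Type*) [NormedAddCommGroup H]
    [InnerProductSpace ℂ H] [CompleteSpace H] where
  toFun : Set Ω → H →L[ℂ] H
  pos : ∀ E, MeasurableSet E → (toFun E).IsPositive
  map_univ : toFun Set.univ = 1
  measure : H → MeasureTheory.Measure Ω
  measure_apply : ∀ (x : H) (E : Set Ω), MeasurableSet E →
    measure x E = ENNReal.ofReal (⟪x, toFun E x⟫_ℂ).re

variable {H : Type*} [NormedAddCommGroup H] [InnerProductSpace ℂ H] [CompleteSpace H]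

/-- A state (positive trace-class operator of unit trace), with trace computed
in the Hilbert basis `b` of the separable Hilbert space `H`. -/
structure QState (b : HilbertBasis ℕ ℂ H) where
  op : H →L[ℂ] H
  pos : op.IsPositive
  tr_one : HasSum (fun i => (⟪b i, op (b i)⟫_ℂ).re) 1

/-- The trace of an operator `T`, computed in the Hilbert basis `b`. -/
noncomputable def trOp (b : HilbertBasis ℕ ℂ H) (T : H →L[ℂ] H) : ℝ :=
  ∑' i, (⟪b i, T (b i)⟫_ℂ).re

/-- A property holds `A`-almost everywhere if it holds outside an `A`-null measurable set. -/
def POVM.ae {Ω : Type*} [MeasurableSpace Ω] (A : POVM Ω H) (p : Ω → Prop) : Prop :=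
  ∃ N, MeasurableSet N ∧ A.toFun N = 0 ∧ ∀ y ∉ N, p y

/-- A `B`-weak Markov kernel: measurable in the second argument, and satisfying the
probability measure axioms `B`-almost everywhere. -/
structure IsWeakMarkovKernel {Ω₁ Ω₂ : Type*} [MeasurableSpace Ω₁] [MeasurableSpace Ω₂]
    (B : POVM Ω₂ H) (κ : Set Ω₁ → Ω₂ → ℝ) : Prop where
  meas : ∀ E, MeasurableSet E → Measurable (κ E)
  bdd : ∀ E, MeasurableSet E → B.ae (fun y => 0 ≤ κ E y ∧ κ E y ≤ 1)
  univ : B.ae fun y => κ Set.univ y = 1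
  empty : B.ae fun y => κ ∅ y = 0
  additive : ∀ E : ℕ → Set Ω₁, (∀ n, MeasurableSet (E n)) →
    Pairwise (Function.onFun Disjoint E) →
    B.ae fun y => HasSum (fun n => κ (E n) y) (κ (⋃ n, E n) y)

/-- `A ⪯_w B`: `A(E) = ∫ κ(E|y) dB(y)` for a `B`-weak Markov kernel `κ`
(the operator equality is expressed weakly, via all vectors `x`). -/
def POVM.WeakFuzzier {Ω₁ Ω₂ : Type*} [MeasurableSpace Ω₁] [MeasurableSpace Ω₂]
    (A : POVM Ω₁ H) (B : POVM Ω₂ H) : Prop :=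
  ∃ κ : Set Ω₁ → Ω₂ → ℝ, IsWeakMarkovKernel B κ ∧
    ∀ E, MeasurableSet E → ∀ x : H, (⟪x, A.toFun E x⟫_ℂ).re = ∫ y, κ E y ∂(B.measure x)

/-- `A ≃_w B`: weak fuzzy equivalence. -/
def POVM.WeakEquiv {Ω₁ Ω₂ : Type*} [MeasurableSpace Ω₁] [MeasurableSpace Ω₂]
    (A : POVM Ω₁ H) (B : POVM Ω₂ H) : Prop :=
  A.WeakFuzzier B ∧ B.WeakFuzzier A

/-- The integrand of the `f`-divergence, with the conventions
`0 ⬝ f(p/0) = p f^*(0)` and `0 ⬝ f^*(0) = 0`, where `fstar = f^*(0) = lim_{t→∞} f(t)/t`. -/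
noncomputable def fDivAux (f : ℝ → ℝ) (fstar : ℝ) (p q : ℝ) : ℝ :=
  if q = 0 then p * fstar else f (p / q) * q

/-- The `f`-divergence `D_f(P,Q) = ∫ f(p/q) q dμ`, computed with the canonical
dominating measure `μ = P + Q`. -/
noncomputable def fDiv {Ω : Type*} [MeasurableSpace Ω] (f : ℝ → ℝ) (fstar : ℝ)
    (P Q : Measure Ω) : ℝ :=
  ∫ x, fDivAux f fstar ((P.rnDeriv (P + Q) x).toReal) ((Q.rnDeriv (P + Q) x).toReal) ∂(P + Q)

section CvxPart

open Filter Set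

variable {f : ℝ → ℝ} {fstar : ℝ}

/-- The infimum of right secant slopes of a convex function at `t`. -/
noncomputable def cA (f : ℝ → ℝ) (t : ℝ) : ℝ :=
  sInf ((fun s => (f s - f t) / (s - t)) '' Set.Ioi t)

/-- Intercept of the supporting line at `t`. -/
noncomputable def cB (f : ℝ → ℝ) (t : ℝ) : ℝ := f t - cA f t * t

lemma cA_bddBelow (hconv : ConvexOn ℝ (Set.Ici (0:ℝ)) f) {t : ℝ} (ht : 0 < t) :
    BddBelow ((fun s => (f s - f t) / (s - t)) '' Set.Ioi t) := by
  refine ⟨(f t - f (t/2)) / (t - t/2), ?_⟩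
  rintro m ⟨s, hs, rfl⟩
  exact hconv.slope_mono_adjacent (by simp; linarith) (by simp at hs ⊢; linarith)
    (by linarith) hs

lemma cA_le (hconv : ConvexOn ℝ (Set.Ici (0:ℝ)) f) {t : ℝ} (ht : 0 < t) {s : ℝ} (hs : t < s) :
    cA f t ≤ (f s - f t) / (s - t) :=
  csInf_le (cA_bddBelow hconv ht) ⟨s, hs, rfl⟩

lemma le_cA (hconv : ConvexOn ℝ (Set.Ici (0:ℝ)) f) {t : ℝ} (ht : 0 < t) {r : ℝ}
    (hr : 0 ≤ r) (hrt : r < t) : (f t - f r) / (t - r) ≤ cA f t := by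
  refine le_csInf ⟨_, ⟨t+1, by simp, rfl⟩⟩ ?_
  rintro m ⟨s, hs, rfl⟩
  exact hconv.slope_mono_adjacent hr (by simp at hs ⊢; linarith) hrt hs

lemma cA_support (hconv : ConvexOn ℝ (Set.Ici (0:ℝ)) f) {t : ℝ} (ht : 0 < t) {u : ℝ}
    (hu : 0 ≤ u) : f t + cA f t * (u - t) ≤ f u := by
  rcases lt_trichotomy u t with h | h | h
  · have h1 := le_cA hconv ht hu h
    have h2 : f t - f u ≤ cA f t * (t - u) := (div_le_iff₀ (by linarith)).mp h1
    nlinarith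
  · subst h; simp
  · have h1 := cA_le hconv ht h
    have h2 : cA f t * (u - t) ≤ f u - f t :=
      (le_div_iff₀ (by linarith : (0:ℝ) < u - t)).mp h1
    linarith

lemma cA_line_le (hconv : ConvexOn ℝ (Set.Ici (0:ℝ)) f) {t : ℝ} (ht : 0 < t) {u : ℝ}
    (hu : 0 ≤ u) : cA f t * u + cB f t ≤ f u := by
  have := cA_support hconv ht hu
  unfold cB; linarith [this]; 

lemma cA_mono (hconv : ConvexOn ℝ (Set.Ici (0:ℝ)) f) {s t : ℝ} (hs : 0 < s) (hst : s < t) :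
    cA f s ≤ cA f t :=
  le_trans (cA_le hconv hs hst) (le_cA hconv (hs.trans hst) hs.le hst)

lemma tendsto_slope_atTop
    (hfstar : Tendsto (fun t => f t / t) atTop (nhds fstar)) (t : ℝ) :
    Tendsto (fun s => (f s - f t) / (s - t)) atTop (nhds fstar) := by
  have hst : Tendsto (fun s : ℝ => s - t) atTop atTop :=
    tendsto_atTop_add_const_right _ _ tendsto_id
  have h2 : Tendsto (fun s : ℝ => s / (s - t)) atTop (nhds 1) := by
    have : Tendsto (fun s : ℝ => 1 + t / (s - t)) atTop (nhds (1 + 0)) :=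
      (tendsto_const_nhds.add (Tendsto.div_atTop tendsto_const_nhds hst))
    rw [add_zero] at this
    refine this.congr' ?_
    filter_upwards [eventually_gt_atTop t] with s hs
    have h6 : s - t ≠ 0 := sub_ne_zero.mpr hs.ne'
    field_simp; ring
  have h3 : Tendsto (fun s : ℝ => f t / (s - t)) atTop (nhds 0) :=
    Tendsto.div_atTop tendsto_const_nhds hst
  have h4 := (hfstar.mul h2).sub h3
  rw [mul_one, sub_zero] at h4
  refine h4.congr' ?_
  filter_upwards [eventually_gt_atTop (max t 0)] with s hs
  rw [sup_lt_iff] at hs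
  have h5 : s ≠ 0 := ne_of_gt hs.2
  have h6 : s - t ≠ 0 := sub_ne_zero.mpr hs.1.ne'
  field_simp

lemma cA_le_fstar (hconv : ConvexOn ℝ (Set.Ici (0:ℝ)) f)
    (hfstar : Tendsto (fun t => f t / t) atTop (nhds fstar)) {t : ℝ} (ht : 0 < t) :
    cA f t ≤ fstar := by
  refine ge_of_tendsto (tendsto_slope_atTop hfstar t) ?_
  filter_upwards [eventually_gt_atTop t] with s hs
  exact cA_le hconv ht hs

lemma exists_cA_big (hconv : ConvexOn ℝ (Set.Ici (0:ℝ)) f)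
    (hfstar : Tendsto (fun t => f t / t) atTop (nhds fstar)) {ε : ℝ} (hε : 0 < ε) :
    ∃ t : ℚ, 0 < (t:ℝ) ∧ fstar - ε < cA f (t:ℝ) := by
  have hhalf : Tendsto (fun t : ℝ => t / 2) atTop atTop :=
    tendsto_id.atTop_div_const (by norm_num)
  have h1 : Tendsto (fun t : ℝ => 2 * (f t / t) - f (t/2) / (t/2)) atTop
      (nhds (2 * fstar - fstar)) :=
    ((hfstar.const_mul 2).sub (hfstar.comp hhalf))
  have h1' : Tendsto (fun t : ℝ => (f t - f (t/2)) / (t - t/2)) atTop (nhds fstar) := by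
    have h2 : (2:ℝ) * fstar - fstar = fstar := by ring
    rw [h2] at h1
    refine h1.congr' ?_
    filter_upwards [eventually_gt_atTop (0:ℝ)] with t htpos
    have htne : t ≠ 0 := ne_of_gt htpos
    show 2 * (f t / t) - f (t/2) / (t/2) = (f t - f (t/2)) / (t - t/2)
    rw [show t - t/2 = t/2 by ring]
    field_simp
  have hev : ∀ᶠ t : ℝ in atTop, fstar - ε < (f t - f (t/2)) / (t - t/2) := by
    have := h1'.eventually (eventually_gt_nhds (by linarith : fstar - ε < fstar))
    exact this
  rw [eventually_atTop] at hev
  obtain ⟨T, hT⟩ := hev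
  obtain ⟨q, hq⟩ := exists_rat_gt (max T 1)
  rw [max_lt_iff] at hq
  have hq0 : (0:ℝ) < q := lt_trans one_pos hq.2
  refine ⟨q, hq0, lt_of_lt_of_le (hT q hq.1.le) ?_⟩
  exact le_cA hconv hq0 (by linarith) (by linarith)

lemma near_attain (hconv : ConvexOn ℝ (Set.Ici (0:ℝ)) f)
    (hfstar : Tendsto (fun t => f t / t) atTop (nhds fstar))
    {p q ε : ℝ} (hp : 0 < p) (hq : 0 ≤ q) (hε : 0 < ε) :
    ∃ t : ℚ, 0 < (t:ℝ) ∧ fDivAux f fstar p q - ε < cA f (t:ℝ) * p + cB f (t:ℝ) * q := by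
  rcases eq_or_lt_of_le hq with hq0 | hq0
  · -- q = 0
    obtain ⟨t, ht0, ht⟩ := exists_cA_big hconv hfstar (div_pos hε hp)
    refine ⟨t, ht0, ?_⟩
    rw [fDivAux, if_pos hq0.symm, ← hq0]
    have h1 : (fstar - ε / p) * p < cA f (t:ℝ) * p := mul_lt_mul_of_pos_right ht hp
    rw [sub_mul, div_mul_cancel₀ _ (ne_of_gt hp)] at h1
    linarith
  · -- q > 0
    obtain ⟨u, hu⟩ : ∃ u, u = p / q := ⟨_, rfl⟩
    have hu0 : 0 < u := hu ▸ div_pos hp hq0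
    obtain ⟨C, hC⟩ : ∃ C, C = cA f u - cA f (u/2) := ⟨_, rfl⟩
    have hC0 : 0 ≤ C := by
      have h := cA_mono hconv (by linarith : (0:ℝ) < u/2) (by linarith : u/2 < u)
      rw [hC]; linarith
    obtain ⟨δ, hδ⟩ : ∃ δ, δ = min (u/2) (ε / (q * (C+1))) := ⟨_, rfl⟩
    have hδ0 : 0 < δ := hδ ▸ lt_min (by linarith) (div_pos hε (by positivity))
    have hδ1 : δ ≤ u/2 := hδ ▸ min_le_left _ _
    have hδle : δ ≤ ε / (q * (C+1)) := hδ ▸ min_le_right _ _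
    obtain ⟨t, ht1, ht2⟩ := exists_rat_btwn (show max (u/2) (u - δ) < u by
      rw [max_lt_iff]; constructor <;> linarith)
    rw [max_lt_iff] at ht1
    have ht0 : 0 < (t:ℝ) := lt_trans (by linarith) ht1.1
    refine ⟨t, ht0, ?_⟩
    rw [fDivAux, if_neg (ne_of_gt hq0), ← hu]
    have hsupp : f u + cA f u * ((t:ℝ) - u) ≤ f (t:ℝ) := cA_support hconv hu0 ht0.le
    have hm1 : cA f (u/2) ≤ cA f (t:ℝ) := cA_mono hconv (by linarith) ht1.1
    have hm2 : cA f (t:ℝ) ≤ cA f u := cA_mono hconv ht0 ht2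
    have key : f u - C * δ ≤ f (t:ℝ) + cA f (t:ℝ) * (u - (t:ℝ)) := by
      have h1 : (cA f u - cA f (t:ℝ)) * (u - (t:ℝ)) ≤ C * δ := by
        apply mul_le_mul
        · rw [hC]; linarith
        · linarith
        · linarith
        · exact hC0
      nlinarith [hsupp]
    have hfin : q * (C * δ) < ε := by
      have h2 : C * δ ≤ C * (ε / (q * (C+1))) := mul_le_mul_of_nonneg_left hδle hC0
      have h2' : q * (C * δ) ≤ q * (C * (ε / (q * (C+1)))) :=
        mul_le_mul_of_nonneg_left h2 hq0.le
      have h3 : q * (C * (ε / (q * (C+1)))) = ε * (C / (C+1)) := by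
        field_simp
      have h4 : ε * (C / (C+1)) < ε := by
        have h5 : C / (C+1) < 1 := by
          rw [div_lt_one (by linarith)]; linarith
        nlinarith
      linarith
    have hassemble : cA f (t:ℝ) * p + cB f (t:ℝ) * q
        = q * (f (t:ℝ) + cA f (t:ℝ) * (u - (t:ℝ))) := by
      have hpu : p = u * q := by rw [hu]; field_simp
      rw [hpu, cB]; ring
    rw [hassemble]
    have h6 : q * (f u - C * δ) ≤ q * (f (t:ℝ) + cA f (t:ℝ) * (u - (t:ℝ))) :=
      mul_le_mul_of_nonneg_left key hq0.le
    nlinarith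

lemma cB_le_f0 (hconv : ConvexOn ℝ (Set.Ici (0:ℝ)) f) {t : ℝ} (ht : 0 < t) :
    cB f t ≤ f 0 := by
  have := cA_line_le hconv ht (le_refl (0:ℝ))
  simpa using this

lemma fDivAux_minorant (hconv : ConvexOn ℝ (Set.Ici (0:ℝ)) f)
    (hfstar : Tendsto (fun t => f t / t) atTop (nhds fstar))
    {t : ℝ} (ht : 0 < t) {p q : ℝ} (hp : 0 ≤ p) (hq : 0 ≤ q) :
    cA f t * p + cB f t * q ≤ fDivAux f fstar p q := by
  rcases eq_or_lt_of_le hq with hq0 | hq0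
  · rw [fDivAux, if_pos hq0.symm, ← hq0]
    have := cA_le_fstar hconv hfstar ht
    nlinarith
  · rw [fDivAux, if_neg (ne_of_gt hq0)]
    have hline := cA_line_le hconv ht (show (0:ℝ) ≤ p / q from by positivity)
    have := mul_le_mul_of_nonneg_left hline hq0.le
    have hpq : q * (cA f t * (p/q) + cB f t) = cA f t * p + cB f t * q := by
      field_simp
    nlinarith

lemma abs_f_le (hconv : ConvexOn ℝ (Set.Ici (0:ℝ)) f)
    (hfstar : Tendsto (fun t => f t / t) atTop (nhds fstar)) {u : ℝ} (hu : 0 ≤ u) :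
    |f u| ≤ (|f 0| + |f 1| + |fstar| + |cA f 1|) * (1 + u) := by
  have ha0 : (0:ℝ) ≤ |f 0| := abs_nonneg _
  have ha1 : (0:ℝ) ≤ |f 1| := abs_nonneg _
  have ha2 : (0:ℝ) ≤ |fstar| := abs_nonneg _
  have ha3 : (0:ℝ) ≤ |cA f 1| := abs_nonneg _
  rw [abs_le]
  constructor
  · have h1 := cA_support hconv one_pos hu
    have h2 : -|cA f 1| * u ≤ cA f 1 * u :=
      mul_le_mul_of_nonneg_right (neg_abs_le _) hu
    have h3 : -(cA f 1) ≤ |cA f 1| := neg_le_abs _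
    have h4 : -|f 1| ≤ f 1 := neg_abs_le _
    have h5 : |cA f 1| * u ≤ (|f 0| + |f 1| + |fstar| + |cA f 1|) * u :=
      mul_le_mul_of_nonneg_right (by linarith) hu
    have hKu : -((|f 0| + |f 1| + |fstar| + |cA f 1|) * u) ≤ cA f 1 * u := by linarith
    have hexp : (|f 0| + |f 1| + |fstar| + |cA f 1|) * (1 + u)
        = (|f 0| + |f 1| + |fstar| + |cA f 1|) + (|f 0| + |f 1| + |fstar| + |cA f 1|) * u := by
      ring
    rw [hexp]
    have hh : f 1 + cA f 1 * (u - 1) = f 1 + cA f 1 * u - cA f 1 := by ring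
    rw [hh] at h1
    have h3' : cA f 1 ≤ |cA f 1| := le_abs_self _
    linarith
  · rcases le_or_gt u 1 with h | h
    · have hcvx := hconv.2 (Set.mem_Ici.mpr (le_refl (0:ℝ)))
        (Set.mem_Ici.mpr zero_le_one) (by linarith : (0:ℝ) ≤ 1 - u) hu (by ring)
      simp only [smul_eq_mul, mul_zero, mul_one, zero_add] at hcvx
      have h6 : (1-u) * f 0 ≤ (1-u) * |f 0| :=
        mul_le_mul_of_nonneg_left (le_abs_self _) (by linarith)
      have h7 : u * f 1 ≤ u * |f 1| := mul_le_mul_of_nonneg_left (le_abs_self _) hu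
      have h8 : (1-u) * |f 0| ≤ |f 0| := by nlinarith
      have h9 : u * |f 1| ≤ |f 1| := by nlinarith
      nlinarith
    · have h1 := le_cA hconv (by linarith : (0:ℝ) < u) (zero_le_one) h
      have h2 := cA_le_fstar hconv hfstar (by linarith : (0:ℝ) < u)
      have h3 : (f u - f 1) / (u - 1) ≤ fstar := le_trans h1 h2
      have h4 : f u - f 1 ≤ fstar * (u - 1) := by
        rw [div_le_iff₀ (by linarith : (0:ℝ) < u - 1)] at h3
        linarith
      have h5 : fstar * (u-1) ≤ |fstar| * (u-1) :=
        mul_le_mul_of_nonneg_right (le_abs_self _) (by linarith)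
      have h6 : |fstar| * (u - 1) ≤ |fstar| * u := by nlinarith
      have h7 : |fstar| * u ≤ (|f 0| + |f 1| + |fstar| + |cA f 1|) * u :=
        mul_le_mul_of_nonneg_right (by linarith) (by linarith)
      nlinarith [le_abs_self (f 1)]

lemma abs_fDivAux_le (hconv : ConvexOn ℝ (Set.Ici (0:ℝ)) f)
    (hfstar : Tendsto (fun t => f t / t) atTop (nhds fstar)) {p q : ℝ}
    (hp : 0 ≤ p) (hq : 0 ≤ q) :
    |fDivAux f fstar p q| ≤ (|f 0| + |f 1| + |fstar| + |cA f 1|) * (p + q) := by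
  have ha0 : (0:ℝ) ≤ |f 0| := abs_nonneg _
  have ha1 : (0:ℝ) ≤ |f 1| := abs_nonneg _
  have ha2 : (0:ℝ) ≤ |fstar| := abs_nonneg _
  have ha3 : (0:ℝ) ≤ |cA f 1| := abs_nonneg _
  rcases eq_or_lt_of_le hq with hq0 | hq0
  · rw [fDivAux, if_pos hq0.symm, ← hq0, abs_mul, abs_of_nonneg hp]
    have h2 : p * |fstar| ≤ p * (|f 0| + |f 1| + |fstar| + |cA f 1|) :=
      mul_le_mul_of_nonneg_left (by linarith) hp
    nlinarith
  · rw [fDivAux, if_neg (ne_of_gt hq0), abs_mul, abs_of_nonneg hq0.le]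
    have h1 := abs_f_le hconv hfstar (show (0:ℝ) ≤ p/q by positivity)
    have h2 : |f (p/q)| * q ≤ (|f 0| + |f 1| + |fstar| + |cA f 1|) * (1 + p/q) * q :=
      mul_le_mul_of_nonneg_right h1 hq0.le
    have h3 : (|f 0| + |f 1| + |fstar| + |cA f 1|) * (1 + p/q) * q
        = (|f 0| + |f 1| + |fstar| + |cA f 1|) * (q + p) := by
      field_simp
    rw [h3] at h2
    have h4 : (|f 0| + |f 1| + |fstar| + |cA f 1|) * (q + p)
        = (|f 0| + |f 1| + |fstar| + |cA f 1|) * (p + q) := by ring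
    linarith

lemma fDivAux_measurable {α : Type*} [MeasurableSpace α]
    (hconv : ConvexOn ℝ (Set.Ici (0:ℝ)) f)
    {u v : α → ℝ} (hu : Measurable u) (hv : Measurable v)
    (hu0 : ∀ x, 0 ≤ u x) (hv0 : ∀ x, 0 ≤ v x) :
    Measurable fun x => fDivAux f fstar (u x) (v x) := by
  classical
  have hcont : ContinuousOn f (Set.Ioi 0) := by
    have := hconv.continuousOn_interior
    rwa [interior_Ici] at this
  have h0v : MeasurableSet {x | v x = 0} := hv (measurableSet_singleton (0:ℝ))
  have h0u : MeasurableSet {x | u x = 0} := hu (measurableSet_singleton (0:ℝ))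
  have hset : MeasurableSet {x | v x = 0 ∨ u x = 0} := by
    rw [Set.setOf_or]; exact h0v.union h0u
  set w : α → ℝ := fun x => if v x = 0 ∨ u x = 0 then 1 else u x / v x with hwdef
  have hw : Measurable w := Measurable.ite hset measurable_const (hu.div hv)
  have hwpos : ∀ x, w x ∈ Set.Ioi (0:ℝ) := by
    intro x
    have hx : 0 < (if v x = 0 ∨ u x = 0 then (1:ℝ) else u x / v x) := by
      split_ifs with h
      · exact zero_lt_one
      · push_neg at h
        exact div_pos (lt_of_le_of_ne (hu0 x) (Ne.symm h.2))
          (lt_of_le_of_ne (hv0 x) (Ne.symm h.1))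
    simpa [hwdef] using hx
  have hF : Measurable fun x => f (w x) := by
    have hmk : Measurable fun x => (⟨w x, hwpos x⟩ : Set.Ioi (0:ℝ)) := hw.subtype_mk
    exact (ContinuousOn.restrict hcont).measurable.comp hmk
  have heq : (fun x => fDivAux f fstar (u x) (v x)) =
      fun x => if v x = 0 then u x * fstar else (if u x = 0 then f 0 * v x else f (w x) * v x) := by
    funext x
    by_cases h1 : v x = 0
    · simp [fDivAux, h1]
    · by_cases h2 : u x = 0
      · simp [fDivAux, h1, h2]
      · simp [fDivAux, h1, h2, hwdef]
  rw [heq]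
  refine Measurable.ite h0v (hu.mul_const _) ?_
  exact Measurable.ite h0u (hv.const_mul _) (hF.mul hv)

end CvxPart
section DPI

set_option maxHeartbeats 1000000

open Filter Set MeasureTheory

/-- Bounded a.e. measurable functions on finite measure spaces are integrable. -/
lemma integrable_of_ae_bound {α : Type*} [MeasurableSpace α] {m : Measure α}
    [IsFiniteMeasure m] {g : α → ℝ} (hm : AEStronglyMeasurable g m) {C : ℝ}
    (h : ∀ᵐ x ∂m, |g x| ≤ C) : Integrable g m :=
  Integrable.mono' (integrable_const C) hm
    (by filter_upwards [h] with x hx; rwa [Real.norm_eq_abs])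

/-- Integral of a function of a finitely-valued measurable map. -/
lemma integral_comp_finValued {α : Type*} [MeasurableSpace α] (R : Measure α)
    [IsFiniteMeasure R] (ψ : α → ℕ) (hψ : Measurable ψ) (s : Finset ℕ)
    (hrange : ∀ x, ψ x ∈ s) (u : ℕ → ℝ) :
    ∫ x, u (ψ x) ∂ R = ∑ n ∈ s, u n * (R (ψ ⁻¹' {n})).toReal := by
  have hfun : (fun x => u (ψ x)) =
      fun x => ∑ n ∈ s, Set.indicator (ψ ⁻¹' {n}) (fun _ => u n) x := by
    funext x
    rw [Finset.sum_eq_single_of_mem (ψ x) (hrange x)]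
    · rw [Set.indicator_of_mem (by exact rfl)]
    · intro n _ hn
      exact Set.indicator_of_notMem (fun hmem => hn (by simpa using hmem.symm)) _
  rw [hfun]
  rw [integral_finset_sum]
  · refine Finset.sum_congr rfl fun n _ => ?_
    rw [integral_indicator_const (u n) (hψ (measurableSet_singleton n))]
    rw [smul_eq_mul, mul_comm, measureReal_def]
  · intro n _
    exact (integrable_const (u n)).indicator (hψ (measurableSet_singleton n))

/-- Both densities of two probability measures w.r.t. their sum add to one a.e. -/
lemma rnDeriv_sum_one {α : Type*} [MeasurableSpace α] (R S : Measure α)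
    [IsProbabilityMeasure R] [IsProbabilityMeasure S] :
    ∀ᵐ x ∂(R + S), (R.rnDeriv (R + S) x).toReal + (S.rnDeriv (R + S) x).toReal = 1 := by
  filter_upwards [Measure.rnDeriv_add' R S (R + S), Measure.rnDeriv_self (R + S),
    Measure.rnDeriv_lt_top R (R + S), Measure.rnDeriv_lt_top S (R + S)]
    with x h1 h2 h3 h4
  have h5 : R.rnDeriv (R + S) x + S.rnDeriv (R + S) x = 1 := by
    rw [← Pi.add_apply, ← h1, h2]
  rw [← ENNReal.toReal_add h3.ne h4.ne, h5, ENNReal.toReal_one]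

theorem fDiv_mono_of_kernel {Ω₁ Ω₂ : Type*} [MeasurableSpace Ω₁] [MeasurableSpace Ω₂]
    {f : ℝ → ℝ} {fstar : ℝ}
    (hconv : ConvexOn ℝ (Set.Ici (0 : ℝ)) f)
    (hfstar : Filter.Tendsto (fun t => f t / t) Filter.atTop (nhds fstar))
    (P Q : Measure Ω₁) (μ ν : Measure Ω₂)
    [IsProbabilityMeasure P] [IsProbabilityMeasure Q]
    [IsProbabilityMeasure μ] [IsProbabilityMeasure ν]
    (κ : Set Ω₁ → Ω₂ → ℝ)
    (hmeas : ∀ E, MeasurableSet E → Measurable (κ E))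
    (hbdd : ∀ E, MeasurableSet E → ∀ᵐ y ∂(μ + ν), 0 ≤ κ E y ∧ κ E y ≤ 1)
    (hempty : ∀ᵐ y ∂(μ + ν), κ ∅ y = 0)
    (huniv : ∀ᵐ y ∂(μ + ν), κ Set.univ y = 1)
    (hadd : ∀ E : ℕ → Set Ω₁, (∀ n, MeasurableSet (E n)) →
      Pairwise (Function.onFun Disjoint E) →
      ∀ᵐ y ∂(μ + ν), HasSum (fun n => κ (E n) y) (κ (⋃ n, E n) y))
    (hP : ∀ E, MeasurableSet E → (P E).toReal = ∫ y, κ E y ∂μ)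
    (hQ : ∀ E, MeasurableSet E → (Q E).toReal = ∫ y, κ E y ∂ν) :
    fDiv f fstar P Q ≤ fDiv f fstar μ ν := by
  classical
  -- reduce to an ε-statement
  suffices key : ∀ ε : ℝ, 0 < ε → fDiv f fstar P Q ≤ fDiv f fstar μ ν + 3 * ε by
    by_contra hcon
    push_neg at hcon
    have h1 := key ((fDiv f fstar P Q - fDiv f fstar μ ν) / 6) (by linarith)
    linarith
  intro ε hε
  -- densities (opaque)
  obtain ⟨p, hpdef⟩ : ∃ p : Ω₂ → ℝ, p = fun y => (μ.rnDeriv (μ + ν) y).toReal := ⟨_, rfl⟩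
  obtain ⟨q, hqdef⟩ : ∃ q : Ω₂ → ℝ, q = fun y => (ν.rnDeriv (μ + ν) y).toReal := ⟨_, rfl⟩
  obtain ⟨pt, hptdef⟩ : ∃ pt : Ω₁ → ℝ, pt = fun x => (P.rnDeriv (P + Q) x).toReal := ⟨_, rfl⟩
  obtain ⟨qt, hqtdef⟩ : ∃ qt : Ω₁ → ℝ, qt = fun x => (Q.rnDeriv (P + Q) x).toReal := ⟨_, rfl⟩
  have hmp : Measurable p := by
    rw [hpdef]; exact (Measure.measurable_rnDeriv μ (μ + ν)).ennreal_toReal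
  have hmq : Measurable q := by
    rw [hqdef]; exact (Measure.measurable_rnDeriv ν (μ + ν)).ennreal_toReal
  have hmpt : Measurable pt := by
    rw [hptdef]; exact (Measure.measurable_rnDeriv P (P + Q)).ennreal_toReal
  have hmqt : Measurable qt := by
    rw [hqtdef]; exact (Measure.measurable_rnDeriv Q (P + Q)).ennreal_toReal
  have hp0 : ∀ y, 0 ≤ p y := by rw [hpdef]; exact fun y => ENNReal.toReal_nonneg
  have hq0 : ∀ y, 0 ≤ q y := by rw [hqdef]; exact fun y => ENNReal.toReal_nonneg
  have hpt0 : ∀ x, 0 ≤ pt x := by rw [hptdef]; exact fun x => ENNReal.toReal_nonneg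
  have hqt0 : ∀ x, 0 ≤ qt x := by rw [hqtdef]; exact fun x => ENNReal.toReal_nonneg
  have hacP : P ≪ P + Q := Measure.absolutelyContinuous_of_le (Measure.le_add_right le_rfl)
  have hacQ : Q ≪ P + Q := Measure.absolutelyContinuous_of_le (Measure.le_add_left le_rfl)
  have hacμ : μ ≪ μ + ν := Measure.absolutelyContinuous_of_le (Measure.le_add_right le_rfl)
  have hacν : ν ≪ μ + ν := Measure.absolutelyContinuous_of_le (Measure.le_add_left le_rfl)
  have hsum_t : ∀ᵐ x ∂(P + Q), pt x + qt x = 1 := by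
    rw [hptdef, hqtdef]; exact rnDeriv_sum_one P Q
  have hsum_y : ∀ᵐ y ∂(μ + ν), p y + q y = 1 := by
    rw [hpdef, hqdef]; exact rnDeriv_sum_one μ ν
  -- global bound constant
  obtain ⟨K, hKdef⟩ : ∃ K : ℝ, K = |f 0| + |f 1| + |fstar| + |cA f 1| := ⟨_, rfl⟩
  have hK0 : 0 ≤ K := by rw [hKdef]; positivity
  have habs : ∀ p' q' : ℝ, 0 ≤ p' → 0 ≤ q' → |fDivAux f fstar p' q'| ≤ K * (p' + q') := by
    rw [hKdef]; exact fun p' q' h1 h2 => abs_fDivAux_le hconv hfstar h1 h2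
  -- coefficient families
  obtain ⟨tv, htv, hsurj⟩ : ∃ tv : ℕ → ℝ, (∀ n, 0 < tv n) ∧
      ∀ t : ℚ, 0 < (t : ℝ) → ∃ n, tv n = (t : ℝ) := by
    refine ⟨fun n => if (0:ℝ) < (((Encodable.decode (α := ℚ) n).getD 1 : ℚ) : ℝ)
      then (((Encodable.decode (α := ℚ) n).getD 1 : ℚ) : ℝ) else 1, fun n => ?_, fun t ht => ?_⟩
    · dsimp only
      split_ifs with hh
      · exact hh
      · exact one_pos
    · refine ⟨Encodable.encode t, ?_⟩
      simp only [Encodable.encodek, Option.getD_some]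
      rw [if_pos ht]
  obtain ⟨aa, haadef⟩ : ∃ aa : ℕ → ℝ, aa = fun n => cA f (tv n) := ⟨_, rfl⟩
  obtain ⟨bb, hbbdef⟩ : ∃ bb : ℕ → ℝ, bb = fun n => cB f (tv n) := ⟨_, rfl⟩
  have haale : ∀ n, aa n ≤ fstar := by
    rw [haadef]; exact fun n => cA_le_fstar hconv hfstar (htv n)
  have hbble : ∀ n, bb n ≤ f 0 := by
    rw [hbbdef]; exact fun n => cB_le_f0 hconv (htv n)
  have hminor : ∀ (n : ℕ) (p' q' : ℝ), 0 ≤ p' → 0 ≤ q' →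
      aa n * p' + bb n * q' ≤ fDivAux f fstar p' q' := by
    rw [haadef, hbbdef]
    exact fun n p' q' h1 h2 => fDivAux_minorant hconv hfstar (htv n) h1 h2
  have hbddAbove : BddAbove (Set.range bb) := ⟨f 0, by rintro _ ⟨n, rfl⟩; exact hbble n⟩
  obtain ⟨β, hβdef⟩ : ∃ β : ℝ, β = ⨆ n, bb n := ⟨_, rfl⟩
  have hβle : β ≤ f 0 := by rw [hβdef]; exact ciSup_le hbble
  have hbbβ : ∀ n, bb n ≤ β := by rw [hβdef]; exact fun n => le_ciSup hbddAbove n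
  obtain ⟨c, hcdef⟩ : ∃ c : ℝ, c = f 0 - β := ⟨_, rfl⟩
  have hc0 : 0 ≤ c := by rw [hcdef]; linarith
  obtain ⟨n₁, hn₁⟩ : ∃ n, β - ε < bb n := by
    rw [hβdef]; exact exists_lt_of_lt_ciSup (by rw [← hβdef]; linarith)
  -- the integrands
  obtain ⟨g, hgdef⟩ : ∃ g : Ω₁ → ℝ, g = fun x => fDivAux f fstar (pt x) (qt x) := ⟨_, rfl⟩
  obtain ⟨gB, hgBdef⟩ : ∃ gB : Ω₂ → ℝ, gB = fun y => fDivAux f fstar (p y) (q y) := ⟨_, rfl⟩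
  have hgmeas : Measurable g := by
    rw [hgdef]; exact fDivAux_measurable hconv hmpt hmqt hpt0 hqt0
  have hgBmeas : Measurable gB := by
    rw [hgBdef]; exact fDivAux_measurable hconv hmp hmq hp0 hq0
  have hgbound : ∀ᵐ x ∂(P + Q), |g x| ≤ K := by
    filter_upwards [hsum_t] with x hx
    have h1 := habs (pt x) (qt x) (hpt0 x) (hqt0 x)
    rw [hx, mul_one] at h1
    rw [hgdef]
    exact h1
  have hgBbound : ∀ᵐ y ∂(μ + ν), |gB y| ≤ K := by
    filter_upwards [hsum_y] with y hy
    have h1 := habs (p y) (q y) (hp0 y) (hq0 y)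
    rw [hy, mul_one] at h1
    rw [hgBdef]
    exact h1
  have hgint : Integrable g (P + Q) := integrable_of_ae_bound hgmeas.aestronglyMeasurable hgbound
  have hgBint : Integrable gB (μ + ν) :=
    integrable_of_ae_bound hgBmeas.aestronglyMeasurable hgBbound
  -- the selection
  obtain ⟨G, hGdef⟩ : ∃ G : ℕ → Ω₁ → Prop,
      G = fun n x => g x - ε < aa n * pt x + bb n * qt x := ⟨_, rfl⟩
  have hGmeas : ∀ n, MeasurableSet {x | G n x} := by
    intro n
    simp only [hGdef]
    exact measurableSet_lt (hgmeas.sub measurable_const)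
      ((hmpt.const_mul _).add (hmqt.const_mul _))
  have hGex : ∀ x, 0 < pt x → ∃ n, G n x := by
    intro x hx
    obtain ⟨t, ht0, ht⟩ := near_attain hconv hfstar hx (hqt0 x) hε
    obtain ⟨n, hn⟩ := hsurj t ht0
    refine ⟨n, ?_⟩
    simp only [hGdef, hgdef, haadef, hbbdef, hn]
    exact ht
  obtain ⟨Qp, hQpdef⟩ : ∃ Qp : ℕ → Ω₁ → Prop,
      Qp = fun n x => if n = 0 then (∀ m, ¬ G m x) else G (n - 1) x := ⟨_, rfl⟩
  have hQpmeas : ∀ n, MeasurableSet {x | Qp n x} := by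
    intro n
    simp only [hQpdef]
    by_cases hn : n = 0
    · simp only [hn, if_true, if_pos]
      have hset0 : {x | ∀ m, ¬ G m x} = ⋂ m, {x | G m x}ᶜ := by ext x; simp
      rw [hset0]
      exact MeasurableSet.iInter fun m => (hGmeas m).compl
    · simp only [hn, if_false]
      exact hGmeas (n - 1)
  have htot : ∀ x, ∃ n, Qp n x := by
    intro x
    by_cases hx : ∃ m, G m x
    · obtain ⟨m, hm⟩ := hx
      exact ⟨m + 1, by simp [hQpdef, hm]⟩
    · push_neg at hx
      exact ⟨0, by simp [hQpdef]; exact hx⟩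
  obtain ⟨ψ, hψdef⟩ : ∃ ψ : Ω₁ → ℕ, ψ = fun x => Nat.find (htot x) := ⟨_, rfl⟩
  have hψmeas : Measurable ψ := by rw [hψdef]; exact measurable_find htot hQpmeas
  have hψspec : ∀ x, Qp (ψ x) x := by rw [hψdef]; exact fun x => Nat.find_spec (htot x)
  obtain ⟨φ, hφdef⟩ : ∃ φ : Ω₁ → ℕ, φ = fun x => if ψ x = 0 then n₁ else ψ x - 1 := ⟨_, rfl⟩
  have hφmeas : Measurable φ := by
    rw [hφdef]
    exact Measurable.ite (hψmeas (measurableSet_singleton 0)) measurable_const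
      ((measurable_from_nat (f := fun k : ℕ => k - 1)).comp hψmeas)
  have hGor : ∀ x, G (φ x) x ∨ φ x = n₁ := by
    intro x
    by_cases h0 : ψ x = 0
    · right; rw [hφdef]; simp [h0]
    · left
      have hspec := hψspec x
      rw [hQpdef] at hspec
      simp only [h0, if_false] at hspec
      rw [hφdef]
      simp only [h0, if_false]
      exact hspec
  have hGφ : ∀ x, 0 < pt x → G (φ x) x := by
    intro x hx
    have hne : ψ x ≠ 0 := by
      intro h0
      have hspec := hψspec x
      rw [h0, hQpdef] at hspec
      simp only [if_pos] at hspec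
      obtain ⟨n, hn⟩ := hGex x hx
      exact hspec n hn
    have hspec := hψspec x
    rw [hQpdef] at hspec
    simp only [hne, if_false] at hspec
    rw [hφdef]
    simp only [hne, if_false]
    exact hspec
  -- h and its truncations
  obtain ⟨h, hhdef⟩ : ∃ h : Ω₁ → ℝ,
      h = fun x => aa (φ x) * pt x + bb (φ x) * qt x := ⟨_, rfl⟩
  obtain ⟨φN, hφNdef⟩ : ∃ φN : ℕ → Ω₁ → ℕ,
      φN = fun N x => if φ x ≤ N then φ x else n₁ := ⟨_, rfl⟩
  have hφNmeas : ∀ N, Measurable (φN N) := by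
    intro N
    rw [hφNdef]
    exact Measurable.ite (hφmeas measurableSet_Iic) hφmeas measurable_const
  obtain ⟨hN, hhNdef⟩ : ∃ hN : ℕ → Ω₁ → ℝ,
      hN = fun N x => aa (φN N x) * pt x + bb (φN N x) * qt x := ⟨_, rfl⟩
  have hmeas_h : Measurable h := by
    rw [hhdef]
    exact ((measurable_from_nat.comp hφmeas).mul hmpt).add
      ((measurable_from_nat.comp hφmeas).mul hmqt)
  have hmeas_hN : ∀ N, Measurable (hN N) := by
    intro N
    rw [hhNdef]
    exact ((measurable_from_nat.comp (hφNmeas N)).mul hmpt).add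
      ((measurable_from_nat.comp (hφNmeas N)).mul hmqt)
  -- uniform bound on h and hN
  obtain ⟨Cd, hCddef⟩ : ∃ Cd : ℝ, Cd = |fstar| + |f 0| + |aa n₁| + |bb n₁| + K + ε := ⟨_, rfl⟩
  have hbound_gen : ∀ (m : ℕ) (x : Ω₁), pt x + qt x = 1 → (G m x ∨ m = n₁) →
      |aa m * pt x + bb m * qt x| ≤ Cd := by
    intro m x hx hm
    have hpt1 : pt x ≤ 1 := by linarith [hqt0 x]
    have hqt1 : qt x ≤ 1 := by linarith [hpt0 x]
    rw [hCddef, abs_le]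
    constructor
    · rcases hm with hm | hm
      · rw [hGdef] at hm
        have h2 : -K ≤ g x := by
          have h3 := habs (pt x) (qt x) (hpt0 x) (hqt0 x)
          rw [hx, mul_one, abs_le] at h3
          rw [hgdef]
          linarith [h3.1]
        have h3 : (0:ℝ) ≤ |aa n₁| + |bb n₁| := by positivity
        have h4 : (0:ℝ) ≤ |fstar| + |f 0| := by positivity
        linarith
      · subst hm
        have h1 : -|aa m| ≤ aa m := neg_abs_le _
        have h2 : -|bb m| ≤ bb m := neg_abs_le _
        have h3 : -|aa m| * pt x ≤ aa m * pt x := mul_le_mul_of_nonneg_right h1 (hpt0 x)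
        have h4 : -|bb m| * qt x ≤ bb m * qt x := mul_le_mul_of_nonneg_right h2 (hqt0 x)
        have h5 : -|aa m| ≤ -|aa m| * pt x := by nlinarith [abs_nonneg (aa m)]
        have h6 : -|bb m| ≤ -|bb m| * qt x := by nlinarith [abs_nonneg (bb m)]
        have h7 : (0:ℝ) ≤ |fstar| + |f 0| + K + ε := by positivity
        linarith
    · have h1 : aa m * pt x ≤ |fstar| * pt x :=
        mul_le_mul_of_nonneg_right (le_trans (haale m) (le_abs_self _)) (hpt0 x)
      have h2 : bb m * qt x ≤ |f 0| * qt x :=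
        mul_le_mul_of_nonneg_right (le_trans (hbble m) (le_abs_self _)) (hqt0 x)
      have h3 : |fstar| * pt x ≤ |fstar| := by nlinarith [abs_nonneg fstar]
      have h4 : |f 0| * qt x ≤ |f 0| := by nlinarith [abs_nonneg (f 0)]
      have h5 : (0:ℝ) ≤ |aa n₁| + |bb n₁| + K + ε := by positivity
      linarith
  have hbound_h : ∀ᵐ x ∂(P + Q), |h x| ≤ Cd := by
    filter_upwards [hsum_t] with x hx
    rw [hhdef]
    exact hbound_gen (φ x) x hx (hGor x)
  have hbound_hN : ∀ N, ∀ᵐ x ∂(P + Q), |hN N x| ≤ Cd := by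
    intro N
    filter_upwards [hsum_t] with x hx
    rw [hhNdef]
    refine hbound_gen (φN N x) x hx ?_
    rw [hφNdef]
    dsimp only
    split_ifs with hle
    · exact hGor x
    · exact Or.inr rfl
  have hint_h : Integrable h (P + Q) :=
    integrable_of_ae_bound hmeas_h.aestronglyMeasurable hbound_h
  have hint_hN : ∀ N, Integrable (hN N) (P + Q) := fun N =>
    integrable_of_ae_bound (hmeas_hN N).aestronglyMeasurable (hbound_hN N)
  -- hN tends to h in L¹ along N → ∞
  have htendpt : ∀ x, Filter.Tendsto (fun N => hN N x) Filter.atTop (nhds (h x)) := by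
    intro x
    have hev : ∀ᶠ N in Filter.atTop, hN N x = h x := by
      filter_upwards [Filter.eventually_ge_atTop (φ x)] with N hNx
      rw [hhNdef, hhdef, hφNdef]
      dsimp only
      rw [if_pos hNx]
    exact Filter.Tendsto.congr' (by filter_upwards [hev] with N hN1; rw [hN1])
      tendsto_const_nhds
  have htend : Filter.Tendsto (fun N => ∫ x, hN N x ∂(P + Q)) Filter.atTop
      (nhds (∫ x, h x ∂(P + Q))) := by
    refine tendsto_integral_of_dominated_convergence (fun _ => Cd)
      (fun N => (hmeas_hN N).aestronglyMeasurable) (integrable_const Cd) ?_ ?_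
    · intro N
      filter_upwards [hbound_hN N] with x hx
      rwa [Real.norm_eq_abs]
    · exact Filter.Eventually.of_forall htendpt
  -- the singular sets
  obtain ⟨T, hTdef⟩ : ∃ T : Set Ω₂, T = {y | p y = 0} := ⟨_, rfl⟩
  have hTmeas : MeasurableSet T := by
    rw [hTdef]; exact hmp (measurableSet_singleton 0)
  obtain ⟨S0, hS0def⟩ : ∃ S0 : Set Ω₁, S0 = {x | pt x = 0} := ⟨_, rfl⟩
  have hS0meas : MeasurableSet S0 := by
    rw [hS0def]; exact hmpt (measurableSet_singleton 0)
  -- PART R : per-N upper bound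
  have hRbound : ∀ N : ℕ, ∫ x, hN N x ∂(P + Q) ≤
      (∫ y, gB y ∂(μ + ν)) - c * (ν T).toReal := by
    intro N
    obtain ⟨s, hsdef⟩ : ∃ s : Finset ℕ, s = insert n₁ (Finset.range (N+1)) := ⟨_, rfl⟩
    have hrange : ∀ x, φN N x ∈ s := by
      intro x
      rw [hφNdef, hsdef]
      dsimp only
      split_ifs with hle
      · exact Finset.mem_insert_of_mem (Finset.mem_range.mpr (Nat.lt_succ_of_le hle))
      · exact Finset.mem_insert_self _ _
    obtain ⟨F, hFdef⟩ : ∃ F : ℕ → Set Ω₁, F = fun n => φN N ⁻¹' {n} := ⟨_, rfl⟩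
    have hFmeas : ∀ n, MeasurableSet (F n) := by
      rw [hFdef]; exact fun n => (hφNmeas N) (measurableSet_singleton n)
    have hFdisj : Pairwise (Function.onFun Disjoint F) := by
      intro m n hmn
      rw [Function.onFun, hFdef]
      refine Set.disjoint_left.mpr fun x hxm hxn => hmn ?_
      have h1 : φN N x = m := hxm
      have h2 : φN N x = n := hxn
      rw [← h1, h2]
    have hFunion : (⋃ n, F n) = Set.univ := by
      rw [hFdef]
      ext x
      simp only [Set.mem_iUnion, Set.mem_univ, iff_true]
      exact ⟨φN N x, rfl⟩
    have hFempty : ∀ n ∉ s, F n = ∅ := by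
      intro n hn
      rw [hFdef]
      ext x
      simp only [Set.mem_preimage, Set.mem_singleton_iff, Set.mem_empty_iff_false, iff_false]
      intro hx
      exact hn (hx ▸ hrange x)
    -- a.e. facts about κ on the partition
    have hκsum : ∀ᵐ y ∂(μ + ν), ∑ n ∈ s, κ (F n) y = 1 := by
      filter_upwards [hadd F hFmeas hFdisj, huniv, hempty] with y hy hu he
      rw [hFunion, hu] at hy
      have hz : ∀ n ∉ s, κ (F n) y = 0 := by
        intro n hn
        rw [hFempty n hn]
        exact he
      exact (hasSum_sum_of_ne_finset_zero hz).unique hy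
    have hκbd : ∀ᵐ y ∂(μ + ν), ∀ n, n ∈ s → 0 ≤ κ (F n) y ∧ κ (F n) y ≤ 1 := by
      rw [MeasureTheory.ae_all_iff]
      intro n
      by_cases hn : n ∈ s
      · filter_upwards [hbdd (F n) (hFmeas n)] with y hy _
        exact hy
      · exact Filter.Eventually.of_forall fun y hmem => absurd hmem hn
    -- a crude uniform coefficient bound on s
    obtain ⟨CN, hCNdef⟩ : ∃ CN : ℝ, CN = ∑ n ∈ s, (|aa n| + |bb n|) := ⟨_, rfl⟩
    have hCNb : ∀ n ∈ s, |aa n| ≤ CN ∧ |bb n| ≤ CN := by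
      intro n hn
      have h1 : |aa n| + |bb n| ≤ CN := by
        rw [hCNdef]
        exact Finset.single_le_sum (f := fun n => |aa n| + |bb n|)
          (fun i _ => by positivity) hn
      constructor
      · have := abs_nonneg (bb n); linarith
      · have := abs_nonneg (aa n); linarith
    -- integrability of the pieces
    have hint1 : Integrable (fun x => pt x * aa (φN N x)) (P + Q) := by
      refine integrable_of_ae_bound
        ((hmpt.mul (measurable_from_nat.comp (hφNmeas N))).aestronglyMeasurable) (C := CN) ?_
      filter_upwards [hsum_t] with x hx
      have h1 : pt x ≤ 1 := by linarith [hqt0 x]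
      have h2 := (hCNb _ (hrange x)).1
      rw [abs_mul, abs_of_nonneg (hpt0 x)]
      calc pt x * |aa (φN N x)| ≤ 1 * CN := by
            apply mul_le_mul h1 h2 (abs_nonneg _) zero_le_one
        _ = CN := one_mul CN
    have hint2 : Integrable (fun x => qt x * bb (φN N x)) (P + Q) := by
      refine integrable_of_ae_bound
        ((hmqt.mul (measurable_from_nat.comp (hφNmeas N))).aestronglyMeasurable) (C := CN) ?_
      filter_upwards [hsum_t] with x hx
      have h1 : qt x ≤ 1 := by linarith [hpt0 x]
      have h2 := (hCNb _ (hrange x)).2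
      rw [abs_mul, abs_of_nonneg (hqt0 x)]
      calc qt x * |bb (φN N x)| ≤ 1 * CN := by
            apply mul_le_mul h1 h2 (abs_nonneg _) zero_le_one
        _ = CN := one_mul CN
    -- step 1 : split the integral
    have e1 : ∫ x, hN N x ∂(P + Q) =
        (∫ x, pt x * aa (φN N x) ∂(P + Q)) + ∫ x, qt x * bb (φN N x) ∂(P + Q) := by
      rw [← integral_add hint1 hint2]
      apply integral_congr_ae
      refine Filter.Eventually.of_forall fun x => ?_
      rw [hhNdef]
      ring
    -- step 2 : pass to P and Q
    have e2 : ∫ x, pt x * aa (φN N x) ∂(P + Q) = ∫ x, aa (φN N x) ∂P := by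
      have h1 := MeasureTheory.integral_rnDeriv_smul hacP
        (f := fun x => aa (φN N x))
      simp only [smul_eq_mul] at h1
      rw [hptdef]
      exact h1
    have e3 : ∫ x, qt x * bb (φN N x) ∂(P + Q) = ∫ x, bb (φN N x) ∂Q := by
      have h1 := MeasureTheory.integral_rnDeriv_smul hacQ
        (f := fun x => bb (φN N x))
      simp only [smul_eq_mul] at h1
      rw [hqtdef]
      exact h1
    -- step 3 : decompose over the partition
    have e4 : ∫ x, aa (φN N x) ∂P = ∑ n ∈ s, aa n * (P (F n)).toReal := by
      rw [integral_comp_finValued P (φN N) (hφNmeas N) s hrange aa, hFdef]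
    have e5 : ∫ x, bb (φN N x) ∂Q = ∑ n ∈ s, bb n * (Q (F n)).toReal := by
      rw [integral_comp_finValued Q (φN N) (hφNmeas N) s hrange bb, hFdef]
    -- step 4 : transfer each piece through the kernel
    have hκint : ∀ n, Integrable (κ (F n)) (μ + ν) := by
      intro n
      refine integrable_of_ae_bound (hmeas (F n) (hFmeas n)).aestronglyMeasurable (C := 1) ?_
      filter_upwards [hbdd (F n) (hFmeas n)] with y hy
      rw [abs_le]
      exact ⟨by linarith [hy.1], hy.2⟩
    have e6 : ∀ n ∈ s, aa n * (P (F n)).toReal = ∫ y, p y * (aa n * κ (F n) y) ∂(μ + ν) := by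
      intro n _
      rw [hP (F n) (hFmeas n), ← integral_const_mul]
      have h1 := MeasureTheory.integral_rnDeriv_smul hacμ
        (f := fun y => aa n * κ (F n) y)
      simp only [smul_eq_mul] at h1
      rw [hpdef]
      exact h1.symm
    have e7 : ∀ n ∈ s, bb n * (Q (F n)).toReal = ∫ y, q y * (bb n * κ (F n) y) ∂(μ + ν) := by
      intro n _
      rw [hQ (F n) (hFmeas n), ← integral_const_mul]
      have h1 := MeasureTheory.integral_rnDeriv_smul hacν
        (f := fun y => bb n * κ (F n) y)
      simp only [smul_eq_mul] at h1
      rw [hqdef]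
      exact h1.symm
    -- integrability of the transferred pieces
    have hintp : ∀ n, Integrable (fun y => p y * (aa n * κ (F n) y)
        + q y * (bb n * κ (F n) y)) (μ + ν) := by
      intro n
      refine integrable_of_ae_bound ?_ (C := |aa n| + |bb n|) ?_
      · exact ((hmp.mul ((hmeas (F n) (hFmeas n)).const_mul _)).add
          (hmq.mul ((hmeas (F n) (hFmeas n)).const_mul _))).aestronglyMeasurable
      · filter_upwards [hsum_y, hbdd (F n) (hFmeas n)] with y hy hb
        have hp1 : p y ≤ 1 := by linarith [hq0 y]
        have hq1 : q y ≤ 1 := by linarith [hp0 y]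
        have hk0 := hb.1
        have hk1 := hb.2
        have hkk : |κ (F n) y| ≤ 1 := by rw [abs_of_nonneg hk0]; exact hk1
        have h2 : |p y * (aa n * κ (F n) y)| ≤ |aa n| := by
          rw [abs_mul, abs_mul]
          have hpa : |p y| ≤ 1 := by rw [abs_of_nonneg (hp0 y)]; exact hp1
          calc |p y| * (|aa n| * |κ (F n) y|)
              ≤ 1 * (|aa n| * 1) := by
                apply mul_le_mul hpa _ (by positivity) zero_le_one
                exact mul_le_mul_of_nonneg_left hkk (abs_nonneg _)
            _ = |aa n| := by ring
        have h3 : |q y * (bb n * κ (F n) y)| ≤ |bb n| := by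
          rw [abs_mul, abs_mul]
          have hqa : |q y| ≤ 1 := by rw [abs_of_nonneg (hq0 y)]; exact hq1
          calc |q y| * (|bb n| * |κ (F n) y|)
              ≤ 1 * (|bb n| * 1) := by
                apply mul_le_mul hqa _ (by positivity) zero_le_one
                exact mul_le_mul_of_nonneg_left hkk (abs_nonneg _)
            _ = |bb n| := by ring
        calc |p y * (aa n * κ (F n) y) + q y * (bb n * κ (F n) y)|
            ≤ |p y * (aa n * κ (F n) y)| + |q y * (bb n * κ (F n) y)| := abs_add_le _ _
          _ ≤ |aa n| + |bb n| := add_le_add h2 h3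
    -- step 5 : swap sum and integral (finite sum)
    have e8 : ∑ n ∈ s, (∫ y, p y * (aa n * κ (F n) y) + q y * (bb n * κ (F n) y) ∂(μ + ν))
        = ∫ y, ∑ n ∈ s, (p y * (aa n * κ (F n) y) + q y * (bb n * κ (F n) y)) ∂(μ + ν) :=
      (integral_finset_sum s fun n _ => hintp n).symm
    -- step 6 : the pointwise bound
    have hHat : ∀ᵐ y ∂(μ + ν), ∑ n ∈ s, (p y * (aa n * κ (F n) y) + q y * (bb n * κ (F n) y))
        ≤ gB y - c * Set.indicator T (fun _ => (1:ℝ)) y * q y := by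
      filter_upwards [hκsum, hκbd, hsum_y] with y hy1 hy2 hy3
      have hterm : ∀ n ∈ s, p y * (aa n * κ (F n) y) + q y * (bb n * κ (F n) y)
          ≤ κ (F n) y * (gB y - c * Set.indicator T (fun _ => (1:ℝ)) y * q y) := by
        intro n hn
        have hk := hy2 n hn
        have hle : aa n * p y + bb n * q y
            ≤ gB y - c * Set.indicator T (fun _ => (1:ℝ)) y * q y := by
          by_cases hpy : p y = 0
          · have hmem : y ∈ T := by rw [hTdef]; exact hpy
            rw [Set.indicator_of_mem hmem]
            rw [hgBdef]
            dsimp only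
            rcases eq_or_lt_of_le (hq0 y) with hqy | hqy
            · rw [fDivAux, if_pos hqy.symm, hpy, ← hqy]
              simp
            · rw [fDivAux, if_neg (ne_of_gt hqy), hpy, zero_div]
              have h1 : bb n * q y ≤ β * q y := mul_le_mul_of_nonneg_right (hbbβ n) hqy.le
              have h2 : c * 1 * q y = (f 0 - β) * q y := by rw [hcdef]; ring
              nlinarith
          · have hmem : y ∉ T := by rw [hTdef]; exact hpy
            rw [Set.indicator_of_notMem hmem]
            rw [hgBdef]
            have := hminor n (p y) (q y) (hp0 y) (hq0 y)
            dsimp only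
            nlinarith
        calc p y * (aa n * κ (F n) y) + q y * (bb n * κ (F n) y)
            = κ (F n) y * (aa n * p y + bb n * q y) := by ring
          _ ≤ κ (F n) y * (gB y - c * Set.indicator T (fun _ => (1:ℝ)) y * q y) :=
            mul_le_mul_of_nonneg_left hle hk.1
      calc ∑ n ∈ s, (p y * (aa n * κ (F n) y) + q y * (bb n * κ (F n) y))
          ≤ ∑ n ∈ s, κ (F n) y * (gB y - c * Set.indicator T (fun _ => (1:ℝ)) y * q y) :=
            Finset.sum_le_sum hterm
        _ = (∑ n ∈ s, κ (F n) y) * (gB y - c * Set.indicator T (fun _ => (1:ℝ)) y * q y) :=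
            (Finset.sum_mul _ _ _).symm
        _ = gB y - c * Set.indicator T (fun _ => (1:ℝ)) y * q y := by rw [hy1, one_mul]
    -- integrability of the RHS
    have hindq_int : Integrable (fun y => c * Set.indicator T (fun _ => (1:ℝ)) y * q y)
        (μ + ν) := by
      refine integrable_of_ae_bound ?_ (C := |c|) ?_
      · exact ((measurable_const.mul
          ((measurable_const.indicator hTmeas))).mul hmq).aestronglyMeasurable
      · filter_upwards [hsum_y] with y hy
        have hq1 : q y ≤ 1 := by linarith [hp0 y]
        rw [abs_mul, abs_mul]
        have h1 : |Set.indicator T (fun _ => (1:ℝ)) y| ≤ 1 := by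
          by_cases hm : y ∈ T
          · rw [Set.indicator_of_mem hm]; simp
          · rw [Set.indicator_of_notMem hm]; simp
        have h2 : |q y| ≤ 1 := by rw [abs_of_nonneg (hq0 y)]; exact hq1
        calc |c| * |Set.indicator T (fun _ => (1:ℝ)) y| * |q y|
            ≤ |c| * 1 * 1 := by
              apply mul_le_mul _ h2 (abs_nonneg _) (by positivity)
              exact mul_le_mul_of_nonneg_left h1 (abs_nonneg c)
          _ = |c| := by ring
    have hrhs_int : Integrable (fun y => gB y - c * Set.indicator T (fun _ => (1:ℝ)) y * q y)
        (μ + ν) := hgBint.sub hindq_int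
    -- step 7 : evaluate the indicator integral
    have e9 : ∫ y, c * Set.indicator T (fun _ => (1:ℝ)) y * q y ∂(μ + ν)
        = c * (ν T).toReal := by
      have h1 : (fun y => c * Set.indicator T (fun _ => (1:ℝ)) y * q y)
          = fun y => c * Set.indicator T q y := by
        funext y
        by_cases hm : y ∈ T
        · rw [Set.indicator_of_mem hm, Set.indicator_of_mem hm]; ring
        · rw [Set.indicator_of_notMem hm, Set.indicator_of_notMem hm]; ring
      rw [h1]
      rw [integral_const_mul]
      congr 1
      rw [integral_indicator hTmeas]
      rw [hqdef]
      exact MeasureTheory.Measure.setIntegral_toReal_rnDeriv hacν T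
    -- assemble
    have e10 : ∫ y, gB y - c * Set.indicator T (fun _ => (1:ℝ)) y * q y ∂(μ + ν)
        = (∫ y, gB y ∂(μ + ν)) - c * (ν T).toReal := by
      rw [integral_sub hgBint hindq_int, e9]
    calc ∫ x, hN N x ∂(P + Q)
        = ∑ n ∈ s, (aa n * (P (F n)).toReal + bb n * (Q (F n)).toReal) := by
          rw [e1, e2, e3, e4, e5, ← Finset.sum_add_distrib]
      _ = ∑ n ∈ s, (∫ y, p y * (aa n * κ (F n) y) + q y * (bb n * κ (F n) y) ∂(μ + ν)) := by
          refine Finset.sum_congr rfl fun n hn => ?_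
          rw [e6 n hn, e7 n hn]
          rw [← integral_add]
          · refine integrable_of_ae_bound
              ((hmp.mul ((hmeas (F n) (hFmeas n)).const_mul _)).aestronglyMeasurable)
              (C := |aa n|) ?_
            filter_upwards [hsum_y, hbdd (F n) (hFmeas n)] with y hy hb
            have hp1 : p y ≤ 1 := by linarith [hq0 y]
            rw [abs_mul, abs_mul, abs_of_nonneg (hp0 y), abs_of_nonneg hb.1]
            calc p y * (|aa n| * κ (F n) y)
                ≤ 1 * (|aa n| * 1) := by
                  apply mul_le_mul hp1 _ (mul_nonneg (abs_nonneg _) hb.1) zero_le_one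
                  exact mul_le_mul_of_nonneg_left hb.2 (abs_nonneg _)
              _ = |aa n| := by ring
          · refine integrable_of_ae_bound
              ((hmq.mul ((hmeas (F n) (hFmeas n)).const_mul _)).aestronglyMeasurable)
              (C := |bb n|) ?_
            filter_upwards [hsum_y, hbdd (F n) (hFmeas n)] with y hy hb
            have hq1 : q y ≤ 1 := by linarith [hp0 y]
            rw [abs_mul, abs_mul, abs_of_nonneg (hq0 y), abs_of_nonneg hb.1]
            calc q y * (|bb n| * κ (F n) y)
                ≤ 1 * (|bb n| * 1) := by
                  apply mul_le_mul hq1 _ (mul_nonneg (abs_nonneg _) hb.1) zero_le_one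
                  exact mul_le_mul_of_nonneg_left hb.2 (abs_nonneg _)
              _ = |bb n| := by ring
      _ = ∫ y, ∑ n ∈ s, (p y * (aa n * κ (F n) y) + q y * (bb n * κ (F n) y)) ∂(μ + ν) := e8
      _ ≤ ∫ y, gB y - c * Set.indicator T (fun _ => (1:ℝ)) y * q y ∂(μ + ν) :=
          integral_mono_ae (integrable_finset_sum s fun n _ => hintp n) hrhs_int hHat
      _ = (∫ y, gB y ∂(μ + ν)) - c * (ν T).toReal := e10
  -- limit over N
  have hlim : ∫ x, h x ∂(P + Q) ≤ (∫ y, gB y ∂(μ + ν)) - c * (ν T).toReal :=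
    le_of_tendsto htend (Filter.Eventually.of_forall hRbound)
  -- lower bound for ∫ h
  have hhlow : ∀ᵐ x ∂(P + Q),
      g x - c * Set.indicator S0 (fun _ => (1:ℝ)) x * qt x - ε ≤ h x := by
    filter_upwards [hsum_t] with x hx
    by_cases hpx : pt x = 0
    · have hmem : x ∈ S0 := by rw [hS0def]; exact hpx
      rw [Set.indicator_of_mem hmem, hhdef]
      dsimp only
      rcases eq_or_lt_of_le (hqt0 x) with hqx | hqx
      · have hgx : g x = 0 := by
          rw [hgdef]
          dsimp only
          rw [fDivAux, if_pos hqx.symm, hpx, zero_mul]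
        rw [hgx, hpx, ← hqx]
        simp only [mul_zero, add_zero, mul_one]
        linarith
      · have hgx : g x = f 0 * qt x := by
          rw [hgdef]
          dsimp only
          rw [fDivAux, if_neg (ne_of_gt hqx), hpx, zero_div]
        have hβq : g x - c * 1 * qt x = β * qt x := by rw [hgx, hcdef]; ring
        rw [hpx, mul_zero, zero_add, mul_one]
        rcases hGor x with hg | hg
        · rw [hGdef] at hg
          rw [hpx, mul_zero, zero_add] at hg
          have h1 : (f 0 - β) * qt x ≥ 0 := mul_nonneg (by linarith) hqx.le
          have h2 : c * qt x = (f 0 - β) * qt x := by rw [hcdef]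
          rw [hgx] at hg ⊢
          nlinarith
        · rw [hg]
          have h1 : (β - ε) * qt x ≤ bb n₁ * qt x :=
            mul_le_mul_of_nonneg_right hn₁.le hqx.le
          have hqt1 : qt x ≤ 1 := by linarith [hpt0 x]
          have h2 : c * qt x = (f 0 - β) * qt x := by rw [hcdef]
          rw [hgx]
          nlinarith
    · have hpos : 0 < pt x := lt_of_le_of_ne (hpt0 x) (Ne.symm hpx)
      have hmem : x ∉ S0 := by rw [hS0def]; exact hpx
      rw [Set.indicator_of_notMem hmem]
      have hg := hGφ x hpos
      rw [hGdef] at hg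
      rw [hhdef]
      dsimp only
      have h1 : c * 0 * qt x = 0 := by ring
      rw [h1]
      linarith
  -- integrability of the indicator term on Ω₁
  have hind_qt_int : Integrable (fun x => c * Set.indicator S0 (fun _ => (1:ℝ)) x * qt x)
      (P + Q) := by
    refine integrable_of_ae_bound ?_ (C := |c|) ?_
    · exact ((measurable_const.mul
        ((measurable_const.indicator hS0meas))).mul hmqt).aestronglyMeasurable
    · filter_upwards [hsum_t] with x hx
      have hqt1 : qt x ≤ 1 := by linarith [hpt0 x]
      rw [abs_mul, abs_mul]
      have h1 : |Set.indicator S0 (fun _ => (1:ℝ)) x| ≤ 1 := by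
        by_cases hm : x ∈ S0
        · rw [Set.indicator_of_mem hm]; simp
        · rw [Set.indicator_of_notMem hm]; simp
      have h2 : |qt x| ≤ 1 := by rw [abs_of_nonneg (hqt0 x)]; exact hqt1
      calc |c| * |Set.indicator S0 (fun _ => (1:ℝ)) x| * |qt x|
          ≤ |c| * 1 * 1 := by
            apply mul_le_mul _ h2 (abs_nonneg _) (by positivity)
            exact mul_le_mul_of_nonneg_left h1 (abs_nonneg c)
        _ = |c| := by ring
  -- the indicator integral on Ω₁
  have hindS0 : ∫ x, c * Set.indicator S0 (fun _ => (1:ℝ)) x * qt x ∂(P + Q)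
      = c * (Q S0).toReal := by
    have h1 : (fun x => c * Set.indicator S0 (fun _ => (1:ℝ)) x * qt x)
        = fun x => c * Set.indicator S0 qt x := by
      funext x
      by_cases hm : x ∈ S0
      · rw [Set.indicator_of_mem hm, Set.indicator_of_mem hm]; ring
      · rw [Set.indicator_of_notMem hm, Set.indicator_of_notMem hm]; ring
    rw [h1, integral_const_mul]
    congr 1
    rw [integral_indicator hS0meas]
    rw [hqtdef]
    exact MeasureTheory.Measure.setIntegral_toReal_rnDeriv hacQ S0
  -- lower bound assembled
  have hconst : ∫ _x : Ω₁, ε ∂(P + Q) = 2 * ε := by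
    rw [integral_const]
    have h2 : (P + Q) Set.univ = 2 := by
      rw [Measure.add_apply, measure_univ, measure_univ]
      norm_num
    rw [Measure.real, h2, smul_eq_mul]
    norm_num
  have hlow : ∫ x, g x ∂(P + Q) ≤ (∫ x, h x ∂(P + Q)) + c * (Q S0).toReal + 2 * ε := by
    have h1 : ∫ x, g x ∂(P + Q) ≤
        ∫ x, (h x + c * Set.indicator S0 (fun _ => (1:ℝ)) x * qt x + ε) ∂(P + Q) := by
      refine integral_mono_ae hgint ((hint_h.add hind_qt_int).add (integrable_const ε)) ?_
      filter_upwards [hhlow] with x hx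
      linarith
    have ha : ∫ x, (h x + c * Set.indicator S0 (fun _ => (1:ℝ)) x * qt x + ε) ∂(P + Q)
        = (∫ x, (h x + c * Set.indicator S0 (fun _ => (1:ℝ)) x * qt x) ∂(P + Q))
          + ∫ _x : Ω₁, ε ∂(P + Q) :=
      integral_add (hint_h.add hind_qt_int) (integrable_const ε)
    have hb : ∫ x, (h x + c * Set.indicator S0 (fun _ => (1:ℝ)) x * qt x) ∂(P + Q)
        = (∫ x, h x ∂(P + Q))
          + ∫ x, c * Set.indicator S0 (fun _ => (1:ℝ)) x * qt x ∂(P + Q) :=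
      integral_add hint_h hind_qt_int
    rw [ha, hb, hindS0, hconst] at h1
    linarith
  -- the singular comparison
  have hQS0 : (Q S0).toReal ≤ (ν T).toReal := by
    have hPS0 : (P S0).toReal = 0 := by
      rw [← measureReal_def, ← MeasureTheory.Measure.setIntegral_toReal_rnDeriv hacP S0]
      have heq : ∀ x ∈ S0, (P.rnDeriv (P + Q) x).toReal = (0:ℝ) := by
        intro x hx
        rw [hS0def] at hx
        have hpx : pt x = (P.rnDeriv (P + Q) x).toReal := by rw [hptdef]
        rw [← hpx]
        exact hx
      rw [MeasureTheory.setIntegral_congr_fun hS0meas heq]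
      simp
    have hPS0' : P S0 = 0 := by
      have hne := measure_ne_top P S0
      rw [ENNReal.toReal_eq_zero_iff] at hPS0
      rcases hPS0 with hz | hz
      · exact hz
      · exact absurd hz hne
    have h0int : ∫ y, κ S0 y ∂μ = 0 := by
      rw [← hP S0 hS0meas, hPS0', ENNReal.toReal_zero]
    have hbμ : ∀ᵐ y ∂μ, 0 ≤ κ S0 y ∧ κ S0 y ≤ 1 :=
      (hbdd S0 hS0meas).filter_mono (ae_mono (Measure.le_add_right le_rfl))
    have hbν : ∀ᵐ y ∂ν, 0 ≤ κ S0 y ∧ κ S0 y ≤ 1 :=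
      (hbdd S0 hS0meas).filter_mono (ae_mono (Measure.le_add_left le_rfl))
    have hκμint : Integrable (κ S0) μ := by
      refine integrable_of_ae_bound (hmeas S0 hS0meas).aestronglyMeasurable (C := 1) ?_
      filter_upwards [hbμ] with y hy
      rw [abs_le]
      exact ⟨by linarith [hy.1], hy.2⟩
    have hκνint : Integrable (κ S0) ν := by
      refine integrable_of_ae_bound (hmeas S0 hS0meas).aestronglyMeasurable (C := 1) ?_
      filter_upwards [hbν] with y hy
      rw [abs_le]
      exact ⟨by linarith [hy.1], hy.2⟩
    have heq0 : κ S0 =ᵐ[μ] 0 := by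
      refine (integral_eq_zero_iff_of_nonneg_ae ?_ hκμint).mp h0int
      filter_upwards [hbμ] with y hy
      exact hy.1
    obtain ⟨W, hWdef⟩ : ∃ W : Set Ω₂, W = {y | κ S0 y ≠ 0} := ⟨_, rfl⟩
    have hWmeas : MeasurableSet W := by
      rw [hWdef]
      exact ((hmeas S0 hS0meas) (measurableSet_singleton 0)).compl
    have hWnull : μ W = 0 := by
      rw [hWdef]
      have h1 := heq0
      rw [Filter.EventuallyEq, ae_iff] at h1
      simpa using h1
    have hset : MeasurableSet (W ∩ Tᶜ) := hWmeas.inter hTmeas.compl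
    have hμWT : μ (W ∩ Tᶜ) = 0 := measure_mono_null Set.inter_subset_left hWnull
    have hlint : ∫⁻ y in W ∩ Tᶜ, μ.rnDeriv (μ + ν) y ∂(μ + ν) = 0 := by
      rw [← withDensity_apply _ hset, Measure.withDensity_rnDeriv_eq μ (μ + ν) hacμ]
      exact hμWT
    have hae0 : ∀ᵐ y ∂(μ + ν).restrict (W ∩ Tᶜ), μ.rnDeriv (μ + ν) y = 0 := by
      have h1 := (lintegral_eq_zero_iff'
        ((Measure.measurable_rnDeriv μ (μ + ν)).aemeasurable)).mp hlint
      filter_upwards [h1] with y hy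
      exact hy
    have hfalse : ∀ᵐ _y ∂(μ + ν).restrict (W ∩ Tᶜ), False := by
      filter_upwards [hae0, ae_restrict_mem hset] with y h1 h2
      have h3 : y ∉ T := h2.2
      rw [hTdef] at h3
      apply h3
      show p y = 0
      have hpy : p y = (μ.rnDeriv (μ + ν) y).toReal := by rw [hpdef]
      rw [hpy, h1, ENNReal.toReal_zero]
    have hlamWT : (μ + ν) (W ∩ Tᶜ) = 0 := by
      have h1 := hfalse
      rw [ae_iff] at h1
      simpa [Measure.restrict_apply_univ] using h1
    have hνWT : ν (W ∩ Tᶜ) = 0 := by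
      have hle : ν (W ∩ Tᶜ) ≤ (μ + ν) (W ∩ Tᶜ) := by
        rw [Measure.add_apply]
        exact le_add_self
      rw [hlamWT] at hle
      exact le_antisymm hle (by simp)
    have hQv : (Q S0).toReal = ∫ y, κ S0 y ∂ν := hQ S0 hS0meas
    have hsplit : ∫ y, κ S0 y ∂ν = (∫ y in T, κ S0 y ∂ν) + ∫ y in Tᶜ, κ S0 y ∂ν :=
      (integral_add_compl hTmeas hκνint).symm
    have hT1 : ∫ y in T, κ S0 y ∂ν ≤ (ν T).toReal := by
      have h1 : ∫ y in T, κ S0 y ∂ν ≤ ∫ _y in T, (1:ℝ) ∂ν := by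
        refine integral_mono_ae hκνint.restrict (integrable_const 1) ?_
        exact ae_restrict_of_ae (by filter_upwards [hbν] with y hy; exact hy.2)
      have h2 : ∫ _y in T, (1:ℝ) ∂ν = (ν T).toReal := by
        rw [setIntegral_const, smul_eq_mul, mul_one, measureReal_def]
      linarith
    have hTc0 : ∫ y in Tᶜ, κ S0 y ∂ν = 0 := by
      have hae : ∀ᵐ y ∂ν.restrict Tᶜ, κ S0 y = 0 := by
        rw [ae_restrict_iff' hTmeas.compl]
        have hnm : ∀ᵐ y ∂ν, y ∉ W ∩ Tᶜ := by
          rw [ae_iff]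
          have hcompl : {y | ¬ y ∉ W ∩ Tᶜ} = W ∩ Tᶜ := by ext y; simp
          rw [hcompl]
          exact hνWT
        filter_upwards [hnm] with y hy hyT
        by_contra hk
        exact hy ⟨by rw [hWdef]; exact hk, hyT⟩
      calc ∫ y in Tᶜ, κ S0 y ∂ν = ∫ _y in Tᶜ, (0:ℝ) ∂ν := integral_congr_ae hae
        _ = 0 := by simp
    rw [hQv, hsplit, hTc0, add_zero]
    exact hT1
  -- conclusion
  have hfdP : fDiv f fstar P Q = ∫ x, g x ∂(P + Q) := by
    rw [hgdef, hptdef, hqtdef]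
    rfl
  have hfdB : fDiv f fstar μ ν = ∫ y, gB y ∂(μ + ν) := by
    rw [hgBdef, hpdef, hqdef]
    rfl
  have hcmono : c * (Q S0).toReal ≤ c * (ν T).toReal := mul_le_mul_of_nonneg_left hQS0 hc0
  rw [hfdP, hfdB]
  linarith

end DPI
section OpPart

set_option synthInstance.maxHeartbeats 1000000
set_option maxHeartbeats 1000000

open MeasureTheory

lemma hasSum_normSq_inner (b : HilbertBasis ℕ ℂ H) (x : H) :
    HasSum (fun i => ‖⟪x, b i⟫_ℂ‖ ^ 2) (‖x‖ ^ 2) := by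
  have h1 := (b.hasSum_inner_mul_inner x x).mapL Complex.reCLM
  have h2 : ∀ i, Complex.reCLM (⟪x, b i⟫_ℂ * ⟪b i, x⟫_ℂ) = ‖⟪x, b i⟫_ℂ‖ ^ 2 := by
    intro i
    have h3 : ⟪b i, x⟫_ℂ = starRingEnd ℂ ⟪x, b i⟫_ℂ := (inner_conj_symm (b i) x).symm
    rw [h3, Complex.mul_conj, Complex.reCLM_apply, Complex.ofReal_re, Complex.normSq_eq_norm_sq]
  have h4 : Complex.reCLM ⟪x, x⟫_ℂ = ‖x‖ ^ 2 := by
    rw [Complex.reCLM_apply]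
    have := inner_self_eq_norm_sq (𝕜 := ℂ) x
    simpa using this
  rw [← h4]
  exact HasSum.congr_fun h1 fun i => (h2 i).symm

lemma trace_cyclic (b : HilbertBasis ℕ ℂ H) (U V : H →L[ℂ] H)
    (hU : Summable fun i => ‖(ContinuousLinearMap.adjoint U) (b i)‖ ^ 2)
    (hV : Summable fun i => ‖V (b i)‖ ^ 2) :
    ∃ S : ℂ, HasSum (fun i => ⟪b i, (U ∘L V) (b i)⟫_ℂ) S ∧
      HasSum (fun i => ⟪b i, (V ∘L U) (b i)⟫_ℂ) S := by
  classical
  obtain ⟨F, hFdef⟩ : ∃ F : ℕ × ℕ → ℂ,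
      F = fun ij => ⟪(ContinuousLinearMap.adjoint U) (b ij.1), b ij.2⟫_ℂ
        * ⟪b ij.2, V (b ij.1)⟫_ℂ := ⟨_, rfl⟩
  have hS1 : Summable fun ij : ℕ × ℕ =>
      ‖⟪(ContinuousLinearMap.adjoint U) (b ij.1), b ij.2⟫_ℂ‖ ^ 2 := by
    refine (summable_prod_of_nonneg (fun ij => sq_nonneg _)).mpr ?_
    constructor
    · intro i
      dsimp only
      exact (hasSum_normSq_inner b _).summable
    · apply Summable.congr hU
      intro i
      dsimp only
      exact ((hasSum_normSq_inner b _).tsum_eq).symm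
  have hS2 : Summable fun ij : ℕ × ℕ => ‖⟪b ij.2, V (b ij.1)⟫_ℂ‖ ^ 2 := by
    refine (summable_prod_of_nonneg (fun ij => sq_nonneg _)).mpr ?_
    constructor
    · intro i
      dsimp only
      apply ((hasSum_normSq_inner b (V (b i))).summable).congr
      intro j
      rw [norm_inner_symm]
    · apply Summable.congr hV
      intro i
      dsimp only
      rw [← (hasSum_normSq_inner b (V (b i))).tsum_eq]
      apply tsum_congr
      intro j
      rw [norm_inner_symm]
  have hFs : Summable F := by
    apply Summable.of_norm_bounded ((hS1.add hS2).div_const 2)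
    intro ij
    rw [hFdef]
    dsimp only
    rw [norm_mul]
    nlinarith [sq_nonneg (‖⟪(ContinuousLinearMap.adjoint U) (b ij.1), b ij.2⟫_ℂ‖
      - ‖⟪b ij.2, V (b ij.1)⟫_ℂ‖), norm_nonneg (⟪(ContinuousLinearMap.adjoint U)
      (b ij.1), b ij.2⟫_ℂ), norm_nonneg (⟪b ij.2, V (b ij.1)⟫_ℂ)]
  have hrow : ∀ i, HasSum (fun j => F (i, j)) ⟪b i, (U ∘L V) (b i)⟫_ℂ := by
    intro i
    have h1 := b.hasSum_inner_mul_inner ((ContinuousLinearMap.adjoint U) (b i)) (V (b i))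
    rw [ContinuousLinearMap.adjoint_inner_left] at h1
    rw [hFdef]
    exact h1
  have h1 : HasSum (fun i => ⟪b i, (U ∘L V) (b i)⟫_ℂ) (∑' ij : ℕ × ℕ, F ij) :=
    HasSum.prod_fiberwise hFs.hasSum hrow
  have hswap : HasSum (fun ij : ℕ × ℕ => F (ij.2, ij.1)) (∑' ij : ℕ × ℕ, F ij) :=
    ((Equiv.prodComm ℕ ℕ).hasSum_iff).mpr hFs.hasSum
  have hcol : ∀ j, HasSum (fun i => F (i, j)) ⟪b j, (V ∘L U) (b j)⟫_ℂ := by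
    intro j
    have h2 := b.hasSum_inner_mul_inner ((ContinuousLinearMap.adjoint V) (b j)) (U (b j))
    rw [ContinuousLinearMap.adjoint_inner_left] at h2
    have h3 : (fun i => F (i, j)) = fun i =>
        ⟪(ContinuousLinearMap.adjoint V) (b j), b i⟫_ℂ * ⟪b i, U (b j)⟫_ℂ := by
      funext i
      rw [hFdef]
      dsimp only
      rw [ContinuousLinearMap.adjoint_inner_left,
        ← ContinuousLinearMap.adjoint_inner_left V]
      ring
    rw [h3]
    exact h2
  have h2 : HasSum (fun j => ⟪b j, (V ∘L U) (b j)⟫_ℂ) (∑' ij : ℕ × ℕ, F ij) :=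
    HasSum.prod_fiberwise hswap hcol
  exact ⟨_, h1, h2⟩

lemma sqrt_facts (b : HilbertBasis ℕ ℂ H) (ρ : QState b) :
    (CFC.sqrt ρ.op * CFC.sqrt ρ.op = ρ.op) ∧
    (∀ x y : H, ⟪(CFC.sqrt ρ.op) x, y⟫_ℂ = ⟪x, (CFC.sqrt ρ.op) y⟫_ℂ) ∧
    HasSum (fun i => ‖(CFC.sqrt ρ.op) (b i)‖ ^ 2) 1 := by
  have hpos : (0 : H →L[ℂ] H) ≤ ρ.op :=
    (ContinuousLinearMap.nonneg_iff_isPositive ρ.op).mpr ρ.pos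
  have hTT : CFC.sqrt ρ.op * CFC.sqrt ρ.op = ρ.op := CFC.sqrt_mul_sqrt_self ρ.op hpos
  have hTpos : (CFC.sqrt ρ.op).IsPositive :=
    (ContinuousLinearMap.nonneg_iff_isPositive _).mp (CFC.sqrt_nonneg _)
  have hsym0 := (ContinuousLinearMap.isSelfAdjoint_iff_isSymmetric).mp hTpos.isSelfAdjoint
  have hsym : ∀ x y : H, ⟪(CFC.sqrt ρ.op) x, y⟫_ℂ = ⟪x, (CFC.sqrt ρ.op) y⟫_ℂ :=
    fun x y => hsym0 x y
  refine ⟨hTT, hsym, ?_⟩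
  have h1 : ∀ i, (⟪b i, ρ.op (b i)⟫_ℂ).re = ‖(CFC.sqrt ρ.op) (b i)‖ ^ 2 := by
    intro i
    have e1 : ρ.op (b i) = (CFC.sqrt ρ.op) ((CFC.sqrt ρ.op) (b i)) := by
      conv_lhs => rw [← hTT]
      rw [ContinuousLinearMap.mul_apply]
    rw [e1, ← hsym (b i) ((CFC.sqrt ρ.op) (b i))]
    have := inner_self_eq_norm_sq (𝕜 := ℂ) ((CFC.sqrt ρ.op) (b i))
    simpa using this
  exact HasSum.congr_fun ρ.tr_one fun i => (h1 i).symm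

lemma trace_repr (b : HilbertBasis ℕ ℂ H) (ρ : QState b) (X : H →L[ℂ] H) :
    HasSum (fun i => (⟪b i, (ρ.op ∘L X) (b i)⟫_ℂ).re) (trOp b (ρ.op ∘L X)) ∧
    HasSum (fun i => (⟪(CFC.sqrt ρ.op) (b i), X ((CFC.sqrt ρ.op) (b i))⟫_ℂ).re)
      (trOp b (ρ.op ∘L X)) := by
  obtain ⟨hTT, hsym, hHS⟩ := sqrt_facts b ρ
  have hUsum : Summable fun i =>
      ‖(ContinuousLinearMap.adjoint (CFC.sqrt ρ.op ∘L X)) (b i)‖ ^ 2 := by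
    have hadj : ContinuousLinearMap.adjoint (CFC.sqrt ρ.op ∘L X)
        = (ContinuousLinearMap.adjoint X) ∘L CFC.sqrt ρ.op := by
      rw [ContinuousLinearMap.adjoint_comp]
      congr 1
      have hTpos : (CFC.sqrt ρ.op).IsPositive :=
        (ContinuousLinearMap.nonneg_iff_isPositive _).mp (CFC.sqrt_nonneg _)
      have h5 := hTpos.isSelfAdjoint.star_eq
      rwa [ContinuousLinearMap.star_eq_adjoint] at h5
    rw [hadj]
    refine Summable.of_nonneg_of_le (fun i => by positivity) (fun i => ?_)
      (hHS.summable.mul_left (‖ContinuousLinearMap.adjoint X‖ ^ 2))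
    have h1 : ‖(ContinuousLinearMap.adjoint X) ((CFC.sqrt ρ.op) (b i))‖
        ≤ ‖ContinuousLinearMap.adjoint X‖ * ‖(CFC.sqrt ρ.op) (b i)‖ :=
      ContinuousLinearMap.le_opNorm _ _
    have h2 : (0:ℝ) ≤ ‖(ContinuousLinearMap.adjoint X) ((CFC.sqrt ρ.op) (b i))‖ :=
      norm_nonneg _
    calc ‖((ContinuousLinearMap.adjoint X) ∘L CFC.sqrt ρ.op) (b i)‖ ^ 2
        = ‖(ContinuousLinearMap.adjoint X) ((CFC.sqrt ρ.op) (b i))‖ ^ 2 := rfl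
      _ ≤ (‖ContinuousLinearMap.adjoint X‖ * ‖(CFC.sqrt ρ.op) (b i)‖) ^ 2 := by
          apply sq_le_sq' (by linarith) h1
      _ = ‖ContinuousLinearMap.adjoint X‖ ^ 2 * ‖(CFC.sqrt ρ.op) (b i)‖ ^ 2 := by ring
  obtain ⟨S, h1, h2⟩ := trace_cyclic b (CFC.sqrt ρ.op ∘L X) (CFC.sqrt ρ.op) hUsum hHS.summable
  have hc2 : CFC.sqrt ρ.op ∘L CFC.sqrt ρ.op = ρ.op := by
    rw [← ContinuousLinearMap.mul_def]
    exact hTT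
  have hcomp : CFC.sqrt ρ.op ∘L (CFC.sqrt ρ.op ∘L X) = ρ.op ∘L X := by
    rw [← ContinuousLinearMap.comp_assoc, hc2]
  rw [hcomp] at h2
  have h3 : (fun i => ⟪b i, ((CFC.sqrt ρ.op ∘L X) ∘L CFC.sqrt ρ.op) (b i)⟫_ℂ)
      = fun i => ⟪(CFC.sqrt ρ.op) (b i), X ((CFC.sqrt ρ.op) (b i))⟫_ℂ := by
    funext i
    rw [ContinuousLinearMap.comp_apply, ContinuousLinearMap.comp_apply,
      ← hsym (b i) (X ((CFC.sqrt ρ.op) (b i)))]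
  rw [h3] at h1
  have h1r := h1.mapL Complex.reCLM
  have h2r := h2.mapL Complex.reCLM
  simp only [Complex.reCLM_apply] at h1r h2r
  have htr : trOp b (ρ.op ∘L X) = S.re := h2r.tsum_eq
  exact ⟨htr ▸ h2r, htr ▸ h1r⟩

lemma pushforward_eq {ΩA ΩB : Type*} [MeasurableSpace ΩA] [MeasurableSpace ΩB]
    (b : HilbertBasis ℕ ℂ H) (A : POVM ΩA H) (B : POVM ΩB H)
    (κ : Set ΩA → ΩB → ℝ) (hκ : IsWeakMarkovKernel B κ)
    (hAk : ∀ E, MeasurableSet E → ∀ x : H,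
      (⟪x, A.toFun E x⟫_ℂ).re = ∫ y, κ E y ∂(B.measure x))
    (ρ : QState b) (PAρ : Measure ΩA) (PBρ : Measure ΩB)
    [IsProbabilityMeasure PBρ]
    (hPAf : ∀ E, MeasurableSet E → (PAρ E).toReal = trOp b (ρ.op ∘L A.toFun E))
    (hPBf : ∀ E, MeasurableSet E → (PBρ E).toReal = trOp b (ρ.op ∘L B.toFun E))
    (E : Set ΩA) (hE : MeasurableSet E) :
    (PAρ E).toReal = ∫ y, κ E y ∂PBρ := by
  classical
  have hmeq : PBρ = Measure.sum (fun i => B.measure ((CFC.sqrt ρ.op) (b i))) := by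
    refine Measure.ext fun F hF => ?_
    rw [Measure.sum_apply _ hF]
    have hBap : ∀ i, B.measure ((CFC.sqrt ρ.op) (b i)) F
        = ENNReal.ofReal
          ((⟪(CFC.sqrt ρ.op) (b i), B.toFun F ((CFC.sqrt ρ.op) (b i))⟫_ℂ).re) :=
      fun i => B.measure_apply _ F hF
    have htr := (trace_repr b ρ (B.toFun F)).2
    have hnn : ∀ i,
        0 ≤ (⟪(CFC.sqrt ρ.op) (b i), B.toFun F ((CFC.sqrt ρ.op) (b i))⟫_ℂ).re := by
      intro i
      have := (B.pos F hF).inner_nonneg_right ((CFC.sqrt ρ.op) (b i))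
      exact (Complex.nonneg_iff.mp this).1
    calc PBρ F = ENNReal.ofReal ((PBρ F).toReal) :=
          (ENNReal.ofReal_toReal (measure_ne_top _ _)).symm
      _ = ENNReal.ofReal (∑' i,
            (⟪(CFC.sqrt ρ.op) (b i), B.toFun F ((CFC.sqrt ρ.op) (b i))⟫_ℂ).re) := by
          rw [hPBf F hF, ← htr.tsum_eq]
      _ = ∑' i, ENNReal.ofReal
            ((⟪(CFC.sqrt ρ.op) (b i), B.toFun F ((CFC.sqrt ρ.op) (b i))⟫_ℂ).re) :=
          ENNReal.ofReal_tsum_of_nonneg hnn htr.summable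
      _ = ∑' i, B.measure ((CFC.sqrt ρ.op) (b i)) F := tsum_congr fun i => (hBap i).symm
  have haeP : ∀ {pr : ΩB → Prop}, B.ae pr → ∀ᵐ y ∂PBρ, pr y := by
    intro pr hpr
    obtain ⟨N, hN, hN0, hNpr⟩ := hpr
    have h1 : (PBρ N).toReal = 0 := by
      rw [hPBf N hN, hN0, ContinuousLinearMap.comp_zero]
      simp [trOp]
    have h2 : PBρ N = 0 := by
      rw [ENNReal.toReal_eq_zero_iff] at h1
      rcases h1 with h1 | h1
      · exact h1
      · exact absurd h1 (measure_ne_top _ _)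
    rw [ae_iff]
    refine measure_mono_null ?_ h2
    intro y hy
    by_contra hyN
    exact hy (hNpr y hyN)
  have hint : Integrable (κ E) PBρ := by
    refine Integrable.mono' (integrable_const 1) ((hκ.meas E hE).aestronglyMeasurable) ?_
    filter_upwards [haeP (hκ.bdd E hE)] with y hy
    rw [Real.norm_eq_abs, abs_le]
    exact ⟨by linarith [hy.1], hy.2⟩
  rw [hmeq] at hint ⊢
  rw [integral_sum_measure hint]
  have hterm : ∀ i, ∫ y, κ E y ∂(B.measure ((CFC.sqrt ρ.op) (b i)))
      = (⟪(CFC.sqrt ρ.op) (b i), A.toFun E ((CFC.sqrt ρ.op) (b i))⟫_ℂ).re :=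
    fun i => (hAk E hE _).symm
  rw [hPAf E hE, ← (trace_repr b ρ (A.toFun E)).2.tsum_eq]
  exact tsum_congr fun i => (hterm i).symm

lemma key_mono {ΩA ΩB : Type*} [MeasurableSpace ΩA] [MeasurableSpace ΩB]
    (b : HilbertBasis ℕ ℂ H) (A : POVM ΩA H) (B : POVM ΩB H)
    (f : ℝ → ℝ) (fstar : ℝ)
    (hconv : ConvexOn ℝ (Set.Ici (0 : ℝ)) f)
    (hfstar : Filter.Tendsto (fun t => f t / t) Filter.atTop (nhds fstar))
    (PA : QState b → Measure ΩA) (PB : QState b → Measure ΩB)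
    (hPA : ∀ (τ : QState b) E, MeasurableSet E → (PA τ E).toReal = trOp b (τ.op ∘L A.toFun E))
    (hPAp : ∀ τ, IsProbabilityMeasure (PA τ))
    (hPB : ∀ (τ : QState b) E, MeasurableSet E → (PB τ E).toReal = trOp b (τ.op ∘L B.toFun E))
    (hPBp : ∀ τ, IsProbabilityMeasure (PB τ))
    (hAB : A.WeakFuzzier B) (ρ σ : QState b) :
    fDiv f fstar (PA ρ) (PA σ) ≤ fDiv f fstar (PB ρ) (PB σ) := by
  obtain ⟨κ, hκ, hAk⟩ := hAB
  haveI := hPAp ρ; haveI := hPAp σ; haveI := hPBp ρ; haveI := hPBp σ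
  have haeS : ∀ {pr : ΩB → Prop}, B.ae pr → ∀ᵐ y ∂(PB ρ + PB σ), pr y := by
    intro pr hpr
    obtain ⟨N, hN, hN0, hNpr⟩ := hpr
    have hz : ∀ τ : QState b, PB τ N = 0 := by
      intro τ
      have h1 : (PB τ N).toReal = 0 := by
        rw [hPB τ N hN, hN0, ContinuousLinearMap.comp_zero]
        simp [trOp]
      rw [ENNReal.toReal_eq_zero_iff] at h1
      rcases h1 with h1 | h1
      · exact h1
      · exact absurd h1 (measure_ne_top _ _)
    rw [ae_iff]
    have hsub : {y | ¬ pr y} ⊆ N := by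
      intro y hy
      by_contra hyN
      exact hy (hNpr y hyN)
    have hzz : (PB ρ + PB σ) N = 0 := by
      rw [Measure.add_apply, hz ρ, hz σ, add_zero]
    exact measure_mono_null hsub hzz
  have hAk' : ∀ E, MeasurableSet E → ∀ x : H,
      (⟪x, A.toFun E x⟫_ℂ).re = ∫ y, κ E y ∂(B.measure x) := hAk
  refine fDiv_mono_of_kernel hconv hfstar (PA ρ) (PA σ) (PB ρ) (PB σ) κ hκ.meas
    (fun E hE => haeS (hκ.bdd E hE)) (haeS hκ.empty) (haeS hκ.univ)
    (fun E hE hd => haeS (hκ.additive E hE hd)) ?_ ?_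
  · exact fun E hE => pushforward_eq b A B κ hκ hAk' ρ (PA ρ) (PB ρ) (hPA ρ) (hPB ρ) E hE
  · exact fun E hE => pushforward_eq b A B κ hκ hAk' σ (PA σ) (PB σ) (hPA σ) (hPB σ) E hE

end OpPart
/-- monotonicity of the `f`-divergence. If `A ⪯_w B` then
`D_f(P^A_ρ, P^A_σ) ≤ D_f(P^B_ρ, P^B_σ)` for all states `ρ, σ`; consequently if
`A ≃_w B` the `f`-divergences coincide. -/
theorem stmt9 {ΩA ΩB : Type*} [MeasurableSpace ΩA] [MeasurableSpace ΩB]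
    (b : HilbertBasis ℕ ℂ H) (A : POVM ΩA H) (B : POVM ΩB H)
    (f : ℝ → ℝ) (fstar : ℝ)
    (hconv : StrictConvexOn ℝ (Set.Ici (0 : ℝ)) f) (hf1 : f 1 = 0)
    (hfstar : Filter.Tendsto (fun t => f t / t) Filter.atTop (nhds fstar))
    (PA : QState b → Measure ΩA) (PB : QState b → Measure ΩB)
    (hPA : ∀ (τ : QState b) E, MeasurableSet E → (PA τ E).toReal = trOp b (τ.op ∘L A.toFun E))
    (hPAp : ∀ τ, IsProbabilityMeasure (PA τ))
    (hPB : ∀ (τ : QState b) E, MeasurableSet E → (PB τ E).toReal = trOp b (τ.op ∘L B.toFun E))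
    (hPBp : ∀ τ, IsProbabilityMeasure (PB τ))
    (hAB : A.WeakFuzzier B) :
    (∀ ρ σ : QState b, fDiv f fstar (PA ρ) (PA σ) ≤ fDiv f fstar (PB ρ) (PB σ)) ∧
      (B.WeakFuzzier A →
        ∀ ρ σ : QState b, fDiv f fstar (PA ρ) (PA σ) = fDiv f fstar (PB ρ) (PB σ)) := by
  have hconv' : ConvexOn ℝ (Set.Ici (0:ℝ)) f := hconv.convexOn
  refine ⟨fun ρ σ => key_mono b A B f fstar hconv' hfstar PA PB hPA hPAp hPB hPBp hAB ρ σ,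
    fun hBA ρ σ => le_antisymm
      (key_mono b A B f fstar hconv' hfstar PA PB hPA hPAp hPB hPBp hAB ρ σ)
      (key_mono b B A f fstar hconv' hfstar PB PA hPB hPBp hPA hPAp hBA ρ σ)⟩
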